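/- arXiv:1209.0938 — 4 statements merged into one kernel-verified Lean document; each statement's English description precedes it below -/
import Mathlib

section
/- The map ω ↦ T_ω (sending a permutation to the shape of the recording tableau of any of its reduced words) is a bijection between the set ⋃ₙ Sₙ of all finite permutations and the set of all finite tower diagrams. -/
abbrev Cell : Type := ℕ × ℕ

/-- A tower diagram: a finite set of cells `(i, j)` with `i ≥ 1` that is downward
closed in each column. -/
def IsTowerDiagram (T : Finset Cell) : Prop :=
  ∀ c ∈ T, 1 ≤ c.1 ∧ ∀ j' ≤ c.2, (c.1, j') ∈ T

/-- The flight path of a cell of `T` (F1: direct flight, F2: zigzag flight). -/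
inductive FlightPath (T : Finset Cell) : Cell → Finset Cell → Prop
  | direct (i j : ℕ) (hmem : (i, j) ∈ T)
      (hnone : ∀ c ∈ T, ¬(c.1 < i ∧ c.1 + c.2 + 1 = i + j)) :
      FlightPath T (i, j) {(i, j)}
  | zigzag (i j i' j' : ℕ) (P : Finset Cell)
      (hmem : (i, j) ∈ T) (hmem' : (i', j') ∈ T)
      (hleft : i' < i) (hdiag : i' + j' + 1 = i + j)
      (hclosest : ∀ c ∈ T, c.1 < i → c.1 + c.2 + 1 = i + j → c.1 ≤ i')
      (hup : (i', j' + 1) ∈ T)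
      (hrec : FlightPath T (i', j') P) :
      FlightPath T (i, j) (insert (i, j) (insert (i', j' + 1) P))

/-- `FlightNumber T c f`: `c` has a flight path in `T` whose lexicographically
least cell has coordinate sum `f`. -/
def FlightNumber (T : Finset Cell) (c : Cell) (f : ℕ) : Prop :=
  ∃ P : Finset Cell, FlightPath T c P ∧
    ∃ m ∈ P, m.1 + m.2 = f ∧ ∀ p ∈ P, m.1 < p.1 ∨ (m.1 = p.1 ∧ m.2 ≤ p.2)

/-- A corner cell: it has a flight path and no cell on top of it. -/
def IsCornerCell (T : Finset Cell) (c : Cell) : Prop :=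
  c ∈ T ∧ (c.1, c.2 + 1) ∉ T ∧ ∃ P, FlightPath T c P

/-- `SlideAux T lo α T'` : sliding `α` into the subdiagram of `T` consisting of
the towers in columns `≥ lo` does not terminate and produces `T'`. -/
inductive SlideAux (T : Finset Cell) : ℕ → ℕ → Finset Cell → Prop
  | s1a (lo α : ℕ)
      (h1 : ∀ c ∈ T, lo ≤ c.1 → c.1 + c.2 + 1 ≠ α)
      (h2 : ∀ c ∈ T, lo ≤ c.1 → c.1 + c.2 ≠ α) :
      SlideAux T lo α (insert (α, 0) T)
  | s1c (lo α : ℕ) (T' : Finset Cell)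
      (h1 : ∀ c ∈ T, lo ≤ c.1 → c.1 + c.2 + 1 ≠ α)
      (h2 : (α, 0) ∈ T) (h2' : lo ≤ α) (h3 : (α, 1) ∈ T)
      (hrec : SlideAux T (α + 1) (α + 1) T') :
      SlideAux T lo α T'
  | s2a (lo α i j : ℕ)
      (hmem : (i, j) ∈ T) (hlo : lo ≤ i) (hdiag : i + j + 1 = α)
      (hmin : ∀ c ∈ T, lo ≤ c.1 → c.1 + c.2 + 1 = α → i ≤ c.1)
      (htop : (i, j + 1) ∉ T) :
      SlideAux T lo α (insert (i, j + 1) T)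
  | s2c (lo α i j : ℕ) (T' : Finset Cell)
      (hmem : (i, j) ∈ T) (hlo : lo ≤ i) (hdiag : i + j + 1 = α)
      (hmin : ∀ c ∈ T, lo ≤ c.1 → c.1 + c.2 + 1 = α → i ≤ c.1)
      (h1 : (i, j + 1) ∈ T) (h2 : (i, j + 2) ∈ T)
      (hrec : SlideAux T (i + 1) (α + 1) T') :
      SlideAux T lo α T'

/-- The slide `α ↘ T` does not terminate and produces `T'`. -/
def Slides (T : Finset Cell) (α : ℕ) (T' : Finset Cell) : Prop :=
  SlideAux T 0 α T'

/-- Successive sliding of the letters of a word into the empty diagram. -/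
inductive SRDiagram : List ℕ → Finset Cell → Prop
  | nil : SRDiagram [] ∅
  | snoc {w : List ℕ} {T T' : Finset Cell} {a : ℕ}
      (hw : SRDiagram w T) (ha : Slides T a T') :
      SRDiagram (w ++ [a]) T'

/-- The shape (underlying diagram) of a labelled tableau. -/
def shapeOf (R : Finset (Cell × ℕ)) : Finset Cell := R.image Prod.fst

/-- The recording tableau of the SR algorithm: the cell created at step `k` is
labelled `k`. -/
inductive SRRecord : List ℕ → Finset (Cell × ℕ) → Prop
  | nil : SRRecord [] ∅
  | snoc {w : List ℕ} {R : Finset (Cell × ℕ)} {a : ℕ} {c : Cell}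
      (hw : SRRecord w R) (hc : c ∉ shapeOf R)
      (ha : Slides (shapeOf R) a (insert c (shapeOf R))) :
      SRRecord (w ++ [a]) (insert (c, w.length + 1) R)

/-- The sliding tableau of the SR algorithm: each new cell `(i, j)` is labelled
`i + j`. -/
inductive SRSliding : List ℕ → Finset (Cell × ℕ) → Prop
  | nil : SRSliding [] ∅
  | snoc {w : List ℕ} {S : Finset (Cell × ℕ)} {a : ℕ} {c : Cell}
      (hw : SRSliding w S) (hc : c ∉ shapeOf S)
      (ha : Slides (shapeOf S) a (insert c (shapeOf S))) :
      SRSliding (w ++ [a]) (insert (c, c.1 + c.2) S)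

/-- A tower tableau: a bijective labelling of a tower diagram by `{1, …, n}`. -/
def IsTowerTableau (R : Finset (Cell × ℕ)) : Prop :=
  IsTowerDiagram (shapeOf R) ∧
  (∀ p ∈ R, ∀ q ∈ R, p.1 = q.1 → p = q) ∧
  R.image Prod.snd = Finset.Icc 1 R.card

/-- The subtableau of cells with labels `≤ a`. -/
def labelLE (R : Finset (Cell × ℕ)) (a : ℕ) : Finset (Cell × ℕ) :=
  R.filter fun p => p.2 ≤ a

/-- A standard tower tableau. -/
def IsStandardTowerTableau (R : Finset (Cell × ℕ)) : Prop :=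
  IsTowerTableau R ∧
  ∀ p ∈ R, IsTowerDiagram (shapeOf (labelLE R p.2)) ∧
    IsCornerCell (shapeOf (labelLE R p.2)) p.1

/-- `ReadsTo R w` : `w` is the reading word of the tableau `R`: the `k`-th letter
is the flight number, in `shape (R_{≤ k})`, of the cell labelled `k`. -/
def ReadsTo (R : Finset (Cell × ℕ)) (w : List ℕ) : Prop :=
  w.length = R.card ∧
  ∀ k : Fin w.length, ∀ c : Cell, (c, (k : ℕ) + 1) ∈ R →
    FlightNumber (shapeOf (labelLE R ((k : ℕ) + 1))) c (w.get k)

/-- A word of positive integers. -/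
def IsPosWord (w : List ℕ) : Prop := ∀ a ∈ w, 1 ≤ a

/-- The permutation represented by a word: the product of the corresponding
adjacent transpositions `sᵢ = (i, i+1)`. -/
def permOf (w : List ℕ) : Equiv.Perm ℕ :=
  (w.map fun i => Equiv.swap i (i + 1)).prod

/-- A reduced word: of minimal length among the positive words representing the
same permutation. -/
def IsReducedWord (w : List ℕ) : Prop :=
  IsPosWord w ∧
    ∀ w' : List ℕ, IsPosWord w' → permOf w' = permOf w → w.length ≤ w'.length

/-- A finite permutation: an element of the direct limit `⋃ₙ Sₙ`. -/
def FinitePerm (ω : Equiv.Perm ℕ) : Prop := ∃ w, IsPosWord w ∧ permOf w = ω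

/-- The Coxeter length of a finite permutation. -/
noncomputable def coxLength (ω : Equiv.Perm ℕ) : ℕ :=
  sInf {n | ∃ w : List ℕ, IsPosWord w ∧ permOf w = ω ∧ w.length = n}

/-- The Rothe diagram of a permutation (pairs written `(row, column)`). -/
def RotheDiagram (ω : Equiv.Perm ℕ) : Set (ℕ × ℕ) :=
  {p | 1 ≤ p.1 ∧ 1 ≤ p.2 ∧ p.2 < ω p.1 ∧ p.1 < ω.symm p.2}

/-- Interchanging rows `i` and `i + 1` of a diagram. -/
def rowSwap (i : ℕ) (D : Set (ℕ × ℕ)) : Set (ℕ × ℕ) :=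
  {p | (Equiv.swap i (i + 1) p.1, p.2) ∈ D}

/-- The natural labelling of a tower diagram: labels `1, …, n` go bottom to top
within each tower, taking the towers from right to left. -/
def naturalTableau (T : Finset Cell) : Finset (Cell × ℕ) :=
  T.image fun c => (c, (T.filter fun d => c.1 < d.1).card + c.2 + 1)

/-- A word in natural form: a concatenation of blocks, each a strictly
increasing run of consecutive integers, whose initial terms strictly decrease. -/
def IsNaturalForm (η : List ℕ) : Prop :=
  ∃ blocks : List (List ℕ),
    η = blocks.flatten ∧
    (∀ b ∈ blocks, ∃ s len : ℕ, 1 ≤ len ∧ b = List.range' s len) ∧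
    List.Chain' (· > ·) (blocks.map fun b => b.headI)

/-- `TowerDiagramOf ω T` : `T` is the tower diagram of the permutation `ω`,
i.e. the result of sliding some reduced word of `ω`. -/
def TowerDiagramOf (ω : Equiv.Perm ℕ) (T : Finset Cell) : Prop :=
  ∃ w : List ℕ, IsReducedWord w ∧ permOf w = ω ∧ SRDiagram w T


namespace TD

def colCard (T : Finset Cell) (i : ℕ) : ℕ := (T.filter fun c => c.1 = i).card
def res (T : Finset Cell) (lo : ℕ) : Finset Cell := T.filter fun c => lo ≤ c.1

def eword (T : Finset Cell) : ℕ → List ℕ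
  | 0 => []
  | N+1 => List.range' N (colCard T N) ++ eword T N

lemma permOf_nil : permOf [] = 1 := rfl

lemma permOf_append (u v : List ℕ) : permOf (u ++ v) = permOf u * permOf v := by
  simp [permOf]

lemma permOf_cons (a : ℕ) (w : List ℕ) :
    permOf (a :: w) = Equiv.swap a (a+1) * permOf w := by simp [permOf]

lemma permOf_singleton (a : ℕ) : permOf [a] = Equiv.swap a (a+1) := by simp [permOf]

lemma permOf_fix_lt {w : List ℕ} {α x : ℕ} (h : ∀ a ∈ w, α ≤ a) (hx : x < α) :
    permOf w x = x := by
  induction w with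
  | nil => rfl
  | cons a w ih =>
    have ha := h a (by simp)
    rw [permOf_cons]
    have : permOf w x = x := ih fun b hb => h b (by simp [hb])
    simp only [Equiv.Perm.mul_apply, this]
    exact Equiv.swap_apply_of_ne_of_ne (by omega) (by omega)

lemma permOf_lt_of_lt {w : List ℕ} {β x : ℕ} (h : ∀ a ∈ w, a + 1 < β) (hx : x < β) :
    permOf w x < β := by
  induction w with
  | nil => exact hx
  | cons a w ih =>
    have ha := h a (by simp)
    have hy : permOf w x < β := ih fun b hb => h b (by simp [hb])
    rw [permOf_cons]
    simp only [Equiv.Perm.mul_apply]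
    rw [Equiv.swap_apply_def]
    split <;> [omega; skip]
    split <;> omega

lemma permOf_fix_big {w : List ℕ} {β x : ℕ} (h : ∀ a ∈ w, a + 1 < β) (hx : β ≤ x) :
    permOf w x = x := by
  induction w with
  | nil => rfl
  | cons a w ih =>
    have ha := h a (by simp)
    rw [permOf_cons]
    have : permOf w x = x := ih fun b hb => h b (by simp [hb])
    simp only [Equiv.Perm.mul_apply, this]
    exact Equiv.swap_apply_of_ne_of_ne (by omega) (by omega)

lemma permOf_ge {w : List ℕ} {lo x : ℕ} (h : ∀ a ∈ w, lo ≤ a) (hx : lo ≤ x) :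
    lo ≤ permOf w x := by
  by_contra hc
  push_neg at hc
  have h1 : permOf w (permOf w x) = permOf w x := permOf_fix_lt h hc
  have := (permOf w).injective h1
  omega

lemma permOf_comm_swap {w : List ℕ} {α : ℕ} (h : ∀ a ∈ w, a + 1 < α) :
    permOf w * Equiv.swap α (α+1) = Equiv.swap α (α+1) * permOf w := by
  ext x
  simp only [Equiv.Perm.mul_apply]
  rcases eq_or_ne x α with rfl | h1
  · rw [Equiv.swap_apply_left, permOf_fix_big h (le_refl _), permOf_fix_big h (by omega),
      Equiv.swap_apply_left]
  rcases eq_or_ne x (α+1) with rfl | h2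
  · rw [Equiv.swap_apply_right, permOf_fix_big h (by omega), permOf_fix_big h (by omega),
      Equiv.swap_apply_right]
  rw [Equiv.swap_apply_of_ne_of_ne h1 h2]
  rcases lt_or_ge x α with hx | hx
  · have := permOf_lt_of_lt h hx
    rw [Equiv.swap_apply_of_ne_of_ne (by omega) (by omega)]
  · have : permOf w x = x := permOf_fix_big h (by omega)
    rw [this, Equiv.swap_apply_of_ne_of_ne h1 h2]

lemma cperm_spec (i h : ℕ) :
    (∀ x, x < i → permOf (List.range' i h) x = x) ∧
    (∀ x, i ≤ x → x < i + h → permOf (List.range' i h) x = x + 1) ∧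
    (permOf (List.range' i h) (i + h) = i) ∧
    (∀ x, i + h < x → permOf (List.range' i h) x = x) := by
  induction h with
  | zero => simp [permOf_nil]
  | succ h ih =>
    obtain ⟨ih1, ih2, ih3, ih4⟩ := ih
    have hr : List.range' i (h+1) = List.range' i h ++ [i + h] := by
      simpa using List.range'_concat (s := i) (n := h) (step := 1)
    have key : ∀ x, permOf (List.range' i (h+1)) x
        = permOf (List.range' i h) (Equiv.swap (i+h) (i+h+1) x) := by
      intro x
      rw [hr, permOf_append, permOf_singleton]
      rfl
    refine ⟨fun x hx => ?_, fun x hx1 hx2 => ?_, ?_, fun x hx => ?_⟩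
    · rw [key, Equiv.swap_apply_of_ne_of_ne (by omega) (by omega)]
      exact ih1 x hx
    · rw [key]
      rcases eq_or_ne x (i+h) with rfl | hne
      · rw [Equiv.swap_apply_left, ih4 _ (by omega)]
      · rw [Equiv.swap_apply_of_ne_of_ne hne (by omega), ih2 x hx1 (by omega)]
    · rw [key, show i + (h+1) = i + h + 1 by omega, Equiv.swap_apply_right, ih3]
    · rw [key, Equiv.swap_apply_of_ne_of_ne (by omega) (by omega), ih4 x (by omega)]

end TD
namespace TD

def invF (σ : Equiv.Perm ℕ) (M : ℕ) : ℕ :=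
  ((Finset.range M ×ˢ Finset.range M).filter fun p => p.1 < p.2 ∧ σ p.2 < σ p.1).card

lemma swap_mono {a x y : ℕ} (hxy : x < y) (hne : ¬(x = a ∧ y = a + 1)) :
    Equiv.swap a (a+1) x < Equiv.swap a (a+1) y := by
  rw [Equiv.swap_apply_def, Equiv.swap_apply_def]
  split_ifs <;> omega

lemma invF_mul_swap (σ : Equiv.Perm ℕ) {a M : ℕ} (hM : a + 1 < M) :
    invF (σ * Equiv.swap a (a+1)) M
      = if σ a < σ (a+1) then invF σ M + 1 else invF σ M - 1 := by
  classical
  set s := Equiv.swap a (a+1) with hs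
  set A := (Finset.range M ×ˢ Finset.range M).filter
    (fun p => p.1 < p.2 ∧ (σ * s) p.2 < (σ * s) p.1) with hA
  set B := (Finset.range M ×ˢ Finset.range M).filter
    (fun p => p.1 < p.2 ∧ σ p.2 < σ p.1) with hB
  have smem : ∀ x, x < M → s x < M := by
    intro x hx; rw [hs, Equiv.swap_apply_def]; split_ifs <;> omega
  have hss : ∀ x, s (s x) = x := fun x => Equiv.swap_apply_self a (a+1) x
  have hsa : s a = a + 1 := Equiv.swap_apply_left a (a+1)
  have hsa' : s (a+1) = a := Equiv.swap_apply_right a (a+1)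
  have hmemA : ∀ p : ℕ × ℕ, p ∈ A.erase (a, a+1) → (s p.1, s p.2) ∈ B.erase (a, a+1) := by
    intro p hp
    rw [Finset.mem_erase, hA, Finset.mem_filter, Finset.mem_product] at hp
    obtain ⟨hne, ⟨h1, h2⟩, h3, h4⟩ := hp
    have hne' : ¬(p.1 = a ∧ p.2 = a+1) := by
      intro ⟨e1, e2⟩; exact hne (by rw [Prod.ext_iff]; exact ⟨e1, e2⟩)
    rw [Finset.mem_erase, hB, Finset.mem_filter, Finset.mem_product]
    refine ⟨?_, ⟨by simpa using ⟨smem _ (by simpa using h1), smem _ (by simpa using h2)⟩, ?_, ?_⟩⟩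
    · intro he
      rw [Prod.mk.injEq] at he
      have e1 : p.1 = a + 1 := by rw [← hss p.1, he.1, hsa]
      have e2 : p.2 = a := by rw [← hss p.2, he.2, hsa']
      omega
    · exact swap_mono h3 hne'
    · simpa [Equiv.Perm.mul_apply] using h4
  have hmemB : ∀ p : ℕ × ℕ, p ∈ B.erase (a, a+1) → (s p.1, s p.2) ∈ A.erase (a, a+1) := by
    intro p hp
    rw [Finset.mem_erase, hB, Finset.mem_filter, Finset.mem_product] at hp
    obtain ⟨hne, ⟨h1, h2⟩, h3, h4⟩ := hp
    have hne' : ¬(p.1 = a ∧ p.2 = a+1) := by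
      intro ⟨e1, e2⟩; exact hne (by rw [Prod.ext_iff]; exact ⟨e1, e2⟩)
    rw [Finset.mem_erase, hA, Finset.mem_filter, Finset.mem_product]
    refine ⟨?_, ⟨by simpa using ⟨smem _ (by simpa using h1), smem _ (by simpa using h2)⟩, ?_, ?_⟩⟩
    · intro he
      rw [Prod.mk.injEq] at he
      have e1 : p.1 = a + 1 := by rw [← hss p.1, he.1, hsa]
      have e2 : p.2 = a := by rw [← hss p.2, he.2, hsa']
      omega
    · exact swap_mono h3 hne'
    · simpa [Equiv.Perm.mul_apply, hss] using h4
  have hcard : (A.erase (a, a+1)).card = (B.erase (a, a+1)).card := by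
    apply Finset.card_bij' (i := fun p _ => (s p.1, s p.2)) (j := fun p _ => (s p.1, s p.2))
      hmemA hmemB
    · intro p _; simp [hss]
    · intro p _; simp [hss]
  have hAB : invF (σ * s) M = A.card ∧ invF σ M = B.card := ⟨rfl, rfl⟩
  have hmemrange : ((a, a+1) : ℕ × ℕ) ∈ Finset.range M ×ˢ Finset.range M := by
    rw [Finset.mem_product]; constructor <;> simp <;> omega
  rcases lt_or_ge (σ a) (σ (a+1)) with hd | hd
  · have hpA : ((a, a+1) : ℕ × ℕ) ∈ A := by
      rw [hA, Finset.mem_filter]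
      refine ⟨hmemrange, by omega, ?_⟩
      show σ (s (a+1)) < σ (s a)
      rw [hsa, hsa']; omega
    have hpB : ((a, a+1) : ℕ × ℕ) ∉ B := by
      intro hmem
      rw [hB, Finset.mem_filter] at hmem
      obtain ⟨-, -, hlt⟩ := hmem
      have hlt' : σ (a+1) < σ a := hlt
      omega
    have e1 : (A.erase (a, a+1)).card + 1 = A.card := Finset.card_erase_add_one hpA
    have e2 : B.erase (a, a+1) = B := Finset.erase_eq_of_notMem hpB
    rw [if_pos hd, hAB.1, hAB.2]
    rw [e2] at hcard
    omega
  · have hd' : σ (a+1) < σ a := by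
      rcases lt_or_eq_of_le hd with h | h
      · exact h
      · exact absurd (σ.injective h.symm) (by omega)
    have hpB : ((a, a+1) : ℕ × ℕ) ∈ B := by
      rw [hB, Finset.mem_filter]
      exact ⟨hmemrange, by omega, hd'⟩
    have hpA : ((a, a+1) : ℕ × ℕ) ∉ A := by
      intro hmem
      rw [hA, Finset.mem_filter] at hmem
      obtain ⟨-, -, hlt⟩ := hmem
      have hlt' : σ (s (a+1)) < σ (s a) := hlt
      rw [hsa, hsa'] at hlt'
      omega
    have e1 : (B.erase (a, a+1)).card + 1 = B.card := Finset.card_erase_add_one hpB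
    have e2 : A.erase (a, a+1) = A := Finset.erase_eq_of_notMem hpA
    rw [if_neg (by omega), hAB.1, hAB.2]
    rw [e2] at hcard
    omega

lemma invF_one (M : ℕ) : invF 1 M = 0 := by
  rw [invF, Finset.card_eq_zero, Finset.filter_eq_empty_iff]
  intro p _
  simp only [Equiv.Perm.one_apply]
  omega

lemma eq_one_of_invF_zero {σ : Equiv.Perm ℕ} {M : ℕ}
    (hfix : ∀ x, M ≤ x → σ x = x) (h : invF σ M = 0) : σ = 1 := by
  by_contra hne
  have : ∃ x, σ x ≠ x := by
    by_contra hc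
    push_neg at hc
    exact hne (Equiv.ext fun x => hc x)
  classical
  obtain ⟨x, hx⟩ := this
  -- least non-fixed point
  have hex : ∃ n, σ n ≠ n := ⟨x, hx⟩
  set x0 := Nat.find hex with hx0
  have hx0ne : σ x0 ≠ x0 := Nat.find_spec hex
  have hmin : ∀ y < x0, σ y = y := fun y hy => by
    have := Nat.find_min hex hy; simpa using this
  have hx0M : x0 < M := by
    by_contra hc; push_neg at hc; exact hx0ne (hfix _ hc)
  set y := σ.symm x0 with hy
  have hσy : σ y = x0 := Equiv.apply_symm_apply σ x0
  have hyne : y ≠ x0 := fun he => hx0ne (he ▸ hσy)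
  have hxy : x0 < y := by
    rcases lt_or_ge y x0 with h | h
    · have e := hmin y h; omega
    · omega
  have hσx0 : x0 < σ x0 := by
    rcases lt_or_ge (σ x0) x0 with h | h
    · have := hmin _ h
      exact absurd (σ.injective this) (by omega)
    · omega
  have hyM : y < M := by
    by_contra hc; push_neg at hc
    have := hfix y hc
    omega
  have : ((x0, y) : ℕ × ℕ) ∈ (Finset.range M ×ˢ Finset.range M).filter
      (fun p => p.1 < p.2 ∧ σ p.2 < σ p.1) := by
    rw [Finset.mem_filter, Finset.mem_product]
    refine ⟨⟨by simpa using hx0M, by simpa using hyM⟩, hxy, ?_⟩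
    show σ y < σ x0
    rw [hσy]; omega
  have : invF σ M ≠ 0 := by
    rw [invF]
    exact Finset.card_ne_zero.2 ⟨_, this⟩
  exact this h

end TD
namespace TD

lemma exists_adj_desc {σ : Equiv.Perm ℕ} :
    ∀ d x y, y - x ≤ d → x < y → σ y < σ x → ∃ a, x ≤ a ∧ a + 1 ≤ y ∧ σ (a+1) < σ a := by
  intro d
  induction d with
  | zero => intro x y h1 h2 _; omega
  | succ d ih =>
    intro x y h1 h2 h3
    rcases eq_or_ne y (x+1) with rfl | hne
    · exact ⟨x, le_refl _, le_refl _, h3⟩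
    rcases lt_or_ge (σ (x+1)) (σ x) with h4 | h4
    · exact ⟨x, le_refl _, by omega, h4⟩
    · obtain ⟨a, ha1, ha2, ha3⟩ := ih (x+1) y (by omega) (by omega) (by omega)
      exact ⟨a, by omega, ha2, ha3⟩

lemma exists_descent {σ : Equiv.Perm ℕ} {M : ℕ} (h : invF σ M ≠ 0) (h0 : σ 0 = 0) :
    ∃ a, 1 ≤ a ∧ a + 1 < M ∧ σ (a+1) < σ a := by
  rw [invF] at h
  obtain ⟨p, hp⟩ := Finset.card_ne_zero.1 h
  rw [Finset.mem_filter, Finset.mem_product] at hp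
  obtain ⟨⟨h1, h2⟩, h3, h4⟩ := hp
  obtain ⟨a, ha1, ha2, ha3⟩ := exists_adj_desc (p.2 - p.1) p.1 p.2 (le_refl _) h3 h4
  refine ⟨a, ?_, ?_, ha3⟩
  · rcases Nat.eq_zero_or_pos a with rfl | h
    · rw [h0] at ha3; omega
    · exact h
  · simp only [Finset.mem_range] at h2; omega

lemma invF_permOf_le {w : List ℕ} {M : ℕ} (h : ∀ a ∈ w, a + 1 < M) :
    invF (permOf w) M ≤ w.length := by
  induction w using List.reverseRecOn with
  | nil => rw [permOf_nil, invF_one]; simp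
  | append_singleton u a ih =>
    rw [permOf_append, permOf_singleton]
    have ha : a + 1 < M := h a (by simp)
    have := invF_mul_swap (permOf u) ha
    have hu := ih fun b hb => h b (by simp [hb])
    rw [this]
    simp only [List.length_append, List.length_singleton]
    split <;> omega

end TD
namespace TD

lemma dcl_mem_iff {S : Finset ℕ} (h : ∀ j ∈ S, ∀ k ≤ j, k ∈ S) {j : ℕ} :
    j ∈ S ↔ j < S.card := by
  constructor
  · intro hj
    have hsub : Finset.range (j+1) ⊆ S := fun k hk =>
      h j hj k (by simpa using Nat.lt_succ_iff.1 (Finset.mem_range.1 hk))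
    have := Finset.card_le_card hsub
    simpa using this
  · intro hj
    by_contra hc
    have hsub : S ⊆ Finset.range j := by
      intro k hk
      rw [Finset.mem_range]
      by_contra hk2
      exact hc (h k hk j (by omega))
    have := Finset.card_le_card hsub
    simp at this
    omega

lemma colCard_image (T : Finset Cell) (i : ℕ) :
    ((T.filter fun c => c.1 = i).image Prod.snd).card = colCard T i := by
  rw [colCard]
  apply Finset.card_image_of_injOn
  intro c hc d hd he
  rw [Finset.mem_coe, Finset.mem_filter] at hc hd
  exact Prod.ext (hc.2.trans hd.2.symm) he

lemma tower_mem_iff {T : Finset Cell} (ht : IsTowerDiagram T) {i j : ℕ} :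
    (i, j) ∈ T ↔ j < colCard T i := by
  have hmem : ∀ k, k ∈ (T.filter fun c => c.1 = i).image Prod.snd ↔ (i, k) ∈ T := by
    intro k
    rw [Finset.mem_image]
    constructor
    · rintro ⟨⟨c1, c2⟩, hc, rfl⟩
      rw [Finset.mem_filter] at hc
      obtain ⟨hcT, rfl⟩ := hc
      exact hcT
    · intro hk
      exact ⟨(i, k), Finset.mem_filter.2 ⟨hk, rfl⟩, rfl⟩
  rw [← colCard_image, ← hmem]
  apply dcl_mem_iff
  intro a ha k hk
  rw [hmem] at ha ⊢
  exact (ht _ ha).2 k hk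

lemma colCard_filter_imp {T : Finset Cell} {p : Cell → Prop} [DecidablePred p] {i : ℕ}
    (h : ∀ c : Cell, c.1 = i → p c) : colCard (T.filter p) i = colCard T i := by
  unfold colCard
  congr 1
  ext c
  simp only [Finset.mem_filter, and_assoc]
  constructor
  · rintro ⟨h1, _, h3⟩; exact ⟨h1, h3⟩
  · rintro ⟨h1, h3⟩; exact ⟨h1, h c h3, h3⟩

lemma colCard_filter_not {T : Finset Cell} {p : Cell → Prop} [DecidablePred p] {i : ℕ}
    (h : ∀ c : Cell, c.1 = i → ¬ p c) : colCard (T.filter p) i = 0 := by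
  unfold colCard
  rw [Finset.card_eq_zero, Finset.filter_eq_empty_iff]
  intro c hc
  rw [Finset.mem_filter] at hc
  intro he
  exact h c he hc.2

lemma eword_congr {T T' : Finset Cell} {N : ℕ}
    (h : ∀ i < N, colCard T i = colCard T' i) : eword T N = eword T' N := by
  induction N with
  | zero => rfl
  | succ N ih =>
    rw [eword, eword, h N (by omega), ih fun i hi => h i (by omega)]

lemma eword_nil {T : Finset Cell} {N : ℕ}
    (h : ∀ i < N, colCard T i = 0) : eword T N = [] := by
  induction N with
  | zero => rfl
  | succ N ih =>
    rw [eword, h N (by omega), ih fun i hi => h i (by omega)]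
    rfl

lemma eword_split (U : Finset Cell) {K N : ℕ} (h : K ≤ N) :
    eword U N = eword (U.filter fun c => K ≤ c.1) N
      ++ eword (U.filter fun c => c.1 < K) K := by
  induction N with
  | zero =>
    have hK : K = 0 := by omega
    subst hK
    rfl
  | succ N ih =>
    rcases eq_or_lt_of_le h with rfl | hlt
    · have e1 : eword (U.filter fun c => N + 1 ≤ c.1) (N+1) = [] := by
        apply eword_nil
        intro i hi
        exact colCard_filter_not fun c hc => by omega
      have e2 : eword (U.filter fun c => c.1 < N + 1) (N+1) = eword U (N+1) := by
        apply eword_congr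
        intro i hi
        exact colCard_filter_imp fun c hc => by omega
      rw [e1, e2, List.nil_append]
    · have hKN : K ≤ N := by omega
      rw [eword, eword, ih hKN,
        colCard_filter_imp (fun c (hc : c.1 = N) => by omega : ∀ c : Cell, c.1 = N → K ≤ c.1)]
      rw [List.append_assoc]

lemma eword_stable {T : Finset Cell} {K N : ℕ} (h : ∀ c ∈ T, c.1 < K) (hKN : K ≤ N) :
    eword T N = eword T K := by
  induction N with
  | zero =>
    have hK : K = 0 := by omega
    subst hK
    rfl
  | succ N ih =>
    rcases eq_or_lt_of_le hKN with rfl | hlt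
    · rfl
    · have : colCard T N = 0 := by
        rw [colCard, Finset.card_eq_zero, Finset.filter_eq_empty_iff]
        intro c hc he
        have := h c hc
        omega
      rw [eword, this, ih (by omega)]
      rfl

lemma eword_letter {T : Finset Cell} {N a : ℕ} (h : a ∈ eword T N) :
    ∃ i, i < N ∧ i ≤ a ∧ a < i + colCard T i := by
  induction N with
  | zero => simp [eword] at h
  | succ N ih =>
    rw [eword, List.mem_append] at h
    rcases h with h | h
    · rw [List.mem_range'_1] at h
      exact ⟨N, by omega, h.1, h.2⟩
    · obtain ⟨i, h1, h2, h3⟩ := ih h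
      exact ⟨i, by omega, h2, h3⟩

lemma eword_length (T : Finset Cell) (N : ℕ) :
    (eword T N).length = (T.filter fun c => c.1 < N).card := by
  induction N with
  | zero =>
    rw [show eword T 0 = [] from rfl]
    simp
  | succ N ih =>
    have hdisj : Disjoint (T.filter fun c => c.1 = N) (T.filter fun c => c.1 < N) := by
      rw [Finset.disjoint_left]
      intro c h1 h2
      rw [Finset.mem_filter] at h1 h2
      omega
    have hun : (T.filter fun c => c.1 < N + 1)
        = (T.filter fun c => c.1 = N) ∪ (T.filter fun c => c.1 < N) := by
      ext c
      simp only [Finset.mem_filter, Finset.mem_union]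
      constructor
      · rintro ⟨h1, h2⟩
        rcases eq_or_lt_of_le (Nat.lt_succ_iff.1 h2) with h | h
        · exact Or.inl ⟨h1, h⟩
        · exact Or.inr ⟨h1, h⟩
      · rintro (⟨h1, h2⟩ | ⟨h1, h2⟩) <;> exact ⟨h1, by omega⟩
    rw [eword, List.length_append, List.length_range', ih, hun,
      Finset.card_union_of_disjoint hdisj]
    rfl

def bnd (T : Finset Cell) : ℕ := (T.sup fun c => c.1) + 1

def phi (T : Finset Cell) : Equiv.Perm ℕ := permOf (eword T (bnd T))

lemma cell_lt_bnd {T : Finset Cell} {c : Cell} (h : c ∈ T) : c.1 < bnd T := by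
  rw [bnd]
  exact Nat.lt_succ_of_le (Finset.le_sup h)

lemma phi_eq {T : Finset Cell} {N : ℕ} (h : ∀ c ∈ T, c.1 < N) :
    permOf (eword T N) = phi T := by
  rw [phi]
  rcases le_total (bnd T) N with hle | hle
  · rw [eword_stable (fun c hc => cell_lt_bnd hc) hle]
  · rw [eword_stable h hle]

end TD
namespace TD

lemma res_zero (T : Finset Cell) : res T 0 = T := by
  rw [res]
  exact Finset.filter_true_of_mem fun c _ => Nat.zero_le _

lemma col_nonempty {T : Finset Cell} {i : ℕ} (h : colCard T i ≠ 0) : ∃ j, (i, j) ∈ T := by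
  rw [colCard] at h
  obtain ⟨c, hc⟩ := Finset.card_ne_zero.1 h
  rw [Finset.mem_filter] at hc
  exact ⟨c.2, by rw [← hc.2]; exact hc.1⟩

lemma res_letters {T : Finset Cell} {lo N a : ℕ} (h : a ∈ eword (res T lo) N) : lo ≤ a := by
  obtain ⟨i, _, h2, h3⟩ := eword_letter h
  have : colCard (res T lo) i ≠ 0 := by omega
  obtain ⟨j, hj⟩ := col_nonempty this
  rw [res, Finset.mem_filter] at hj
  exact le_trans hj.2 h2

lemma low_letters_bound {T : Finset Cell} {lo β α : ℕ} (ht : IsTowerDiagram T)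
    (hβα : β ≤ α)
    (hd : ∀ c ∈ T, lo ≤ c.1 → c.1 < β → c.1 + c.2 + 1 ≠ α) :
    ∀ a ∈ eword (T.filter fun c => lo ≤ c.1 ∧ c.1 < β) β, a + 1 < α := by
  intro a ha
  obtain ⟨i, hi1, hi2, hi3⟩ := eword_letter ha
  set W := T.filter fun c => lo ≤ c.1 ∧ c.1 < β with hW
  have hcol : colCard W i ≠ 0 := by omega
  obtain ⟨j, hj⟩ := col_nonempty hcol
  rw [hW, Finset.mem_filter] at hj
  obtain ⟨hjT, hjlo, hjβ⟩ := hj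
  have hWcol : colCard W i = colCard T i :=
    colCard_filter_imp fun c hc => by constructor <;> omega
  by_contra hc
  push_neg at hc
  -- a + 1 ≥ α, i.e. a ≥ α - 1; the cell (i, α-1-i) is in T
  have hiα : i + 1 ≤ α := by omega
  have hj0 : α - 1 - i < colCard T i := by omega
  have hcell : (i, α - 1 - i) ∈ T := (tower_mem_iff ht).2 hj0
  exact hd _ hcell hjlo hjβ (by omega)

lemma eword_res_split {T : Finset Cell} {lo β N : ℕ} (hlo : lo ≤ β) (hβ : β + 1 ≤ N) :
    eword (res T lo) N =
      eword (res T (β+1)) N ++ List.range' β (colCard T β)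
        ++ eword (T.filter fun c => lo ≤ c.1 ∧ c.1 < β) β := by
  have h1 := eword_split (res T lo) hβ
  have e1 : (res T lo).filter (fun c => β + 1 ≤ c.1) = res T (β+1) := by
    ext c
    simp only [res, Finset.mem_filter, and_assoc]
    constructor
    · rintro ⟨h1, h2, h3⟩; exact ⟨h1, h3⟩
    · rintro ⟨h1, h3⟩; exact ⟨h1, by omega, h3⟩
  set V := (res T lo).filter fun c => c.1 < β + 1 with hV
  have e2 : eword V (β+1) = List.range' β (colCard T β)
      ++ eword (T.filter fun c => lo ≤ c.1 ∧ c.1 < β) β := by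
    rw [show eword V (β+1) = List.range' β (colCard V β) ++ eword V β from rfl]
    have e3 : colCard V β = colCard T β := by
      rw [hV, res, Finset.filter_filter]
      exact colCard_filter_imp fun c hc => by omega
    have e4 : eword V β = eword (T.filter fun c => lo ≤ c.1 ∧ c.1 < β) β := by
      apply eword_congr
      intro i hi
      rw [hV, res, Finset.filter_filter]
      rcases le_or_gt lo i with hloi | hloi
      · rw [colCard_filter_imp (fun c hc => by omega : ∀ c : Cell, c.1 = i → lo ≤ c.1 ∧ c.1 < β + 1),
          colCard_filter_imp (fun c hc => by omega : ∀ c : Cell, c.1 = i → lo ≤ c.1 ∧ c.1 < β)]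
      · rw [colCard_filter_not (fun c hc => by omega : ∀ c : Cell, c.1 = i → ¬(lo ≤ c.1 ∧ c.1 < β + 1)),
          colCard_filter_not (fun c hc => by omega : ∀ c : Cell, c.1 = i → ¬(lo ≤ c.1 ∧ c.1 < β))]
    rw [e3, e4]
  rw [h1, e1, e2, List.append_assoc]

lemma swap_cperm {i h α : ℕ} (h1 : i ≤ α) (h2 : α + 1 < i + h) :
    Equiv.swap (α+1) (α+2) * permOf (List.range' i h)
      = permOf (List.range' i h) * Equiv.swap α (α+1) := by
  obtain ⟨Xlt, Xmid, Xtop, Xgt⟩ := cperm_spec i h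
  set X := permOf (List.range' i h) with hX
  have hα : X α = α + 1 := Xmid α h1 (by omega)
  have hα1 : X (α+1) = α + 2 := Xmid (α+1) (by omega) h2
  have := Equiv.swap_apply_apply X α (α+1)
  rw [hα, hα1] at this
  rw [this, mul_assoc, mul_assoc]
  congr 1
  rw [inv_mul_cancel, mul_one]

end TD
namespace TD

lemma slide_main {T : Finset Cell} (ht : IsTowerDiagram T) :
    ∀ {lo α : ℕ} {T' : Finset Cell}, SlideAux T lo α T' → 1 ≤ α → lo ≤ α →
    (∃ c, c ∉ T ∧ lo ≤ c.1 ∧ T' = insert c T) ∧ IsTowerDiagram T' ∧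
    (∀ N, (∀ d ∈ T', d.1 < N) →
      permOf (eword (res T' lo) N) = permOf (eword (res T lo) N) * Equiv.swap α (α+1) ∧
      permOf (eword (res T lo) N) α < permOf (eword (res T lo) N) (α+1)) := by
  intro lo α T' hSA
  induction hSA with
  | s1a lo α h1 h2 =>
    intro hα hlo
    have hc0 : (α, 0) ∉ T := fun hm => h2 _ hm hlo rfl
    have hcolα : colCard T α = 0 := by
      by_contra h
      obtain ⟨j, hj⟩ := col_nonempty h
      exact hc0 ((ht _ hj).2 0 (Nat.zero_le _))
    have htow' : IsTowerDiagram (insert (α, 0) T) := by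
      intro c hc
      rcases Finset.mem_insert.1 hc with rfl | hc
      · refine ⟨hα, fun j' hj' => ?_⟩
        have : j' = 0 := by omega
        subst this
        exact Finset.mem_insert_self _ _
      · obtain ⟨g1, g2⟩ := ht c hc
        exact ⟨g1, fun j' hj' => Finset.mem_insert_of_mem (g2 j' hj')⟩
    refine ⟨⟨(α, 0), hc0, hlo, rfl⟩, htow', ?_⟩
    intro N hN
    have hαN : α + 1 ≤ N := hN (α, 0) (Finset.mem_insert_self _ _)
    have hT := eword_res_split (T := T) (lo := lo) (β := α) hlo hαN
    have hT' := eword_res_split (T := insert (α, 0) T) (lo := lo) (β := α) hlo hαN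
    have e1 : res (insert (α, 0) T) (α+1) = res T (α+1) := by
      rw [res, Finset.filter_insert, if_neg (by omega : ¬ α + 1 ≤ ((α, 0) : Cell).1)]
      rfl
    have e2 : colCard (insert (α, 0) T) α = 1 := by
      rw [colCard, Finset.filter_insert, if_pos rfl,
        Finset.card_insert_of_notMem (fun hm => hc0 (Finset.mem_filter.1 hm).1)]
      have hc2 : (T.filter fun c => c.1 = α).card = 0 := hcolα
      omega
    have e3 : (insert (α, 0) T).filter (fun c => lo ≤ c.1 ∧ c.1 < α)
        = T.filter (fun c => lo ≤ c.1 ∧ c.1 < α) := by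
      rw [Finset.filter_insert, if_neg (fun h => absurd h.2 (lt_irrefl α))]
    have hYlet : ∀ a ∈ eword (T.filter fun c => lo ≤ c.1 ∧ c.1 < α) α, a + 1 < α :=
      low_letters_bound ht (le_refl α) (fun c hc hl _ => h1 c hc hl)
    have hAlet : ∀ a ∈ eword (res T (α+1)) N, α + 1 ≤ a := fun a ha => res_letters ha
    have hYcomm := permOf_comm_swap hYlet
    set A := permOf (eword (res T (α+1)) N) with hA
    set Y := permOf (eword (T.filter fun c => lo ≤ c.1 ∧ c.1 < α) α) with hY
    have ePT : permOf (eword (res T lo) N) = A * Y := by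
      rw [hT, hcolα, show List.range' α 0 = [] from rfl, List.append_nil, permOf_append]
    have ePT' : permOf (eword (res (insert (α, 0) T) lo) N)
        = A * (Equiv.swap α (α+1) * Y) := by
      rw [hT', e1, e2, e3, show List.range' α 1 = [α] from rfl, permOf_append, permOf_append,
        permOf_singleton, mul_assoc]
    constructor
    · rw [ePT, ePT', mul_assoc, hYcomm]
    · rw [ePT]
      have hYα : Y α = α := permOf_fix_big hYlet (le_refl α)
      have hYα1 : Y (α+1) = α+1 := permOf_fix_big hYlet (by omega)
      have hAα : A α = α := permOf_fix_lt hAlet (by omega)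
      have hA1 : α + 1 ≤ A (α+1) := permOf_ge hAlet (le_refl _)
      simp only [Equiv.Perm.mul_apply]
      rw [hYα, hYα1, hAα]
      omega
  | s1c lo α T' h1 h2 h2' h3 hrec ih =>
    intro hα hlo
    obtain ⟨⟨c, hcm, hclo, rfl⟩, htow', hperm'⟩ := ih (by omega) (le_refl _)
    have hcol2 : 2 ≤ colCard T α := by
      have := (tower_mem_iff ht).1 h3
      omega
    refine ⟨⟨c, hcm, by omega, rfl⟩, htow', ?_⟩
    intro N hN
    have hαN : α + 1 ≤ N := hN (α, 0) (Finset.mem_insert_of_mem h2)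
    obtain ⟨hA', hAasc⟩ := hperm' N hN
    have hT := eword_res_split (T := T) (lo := lo) (β := α) hlo hαN
    have hT' := eword_res_split (T := insert c T) (lo := lo) (β := α) hlo hαN
    have e2 : colCard (insert c T) α = colCard T α := by
      rw [colCard, Finset.filter_insert, if_neg (by omega : ¬ c.1 = α)]
      rfl
    have e3 : (insert c T).filter (fun d => lo ≤ d.1 ∧ d.1 < α)
        = T.filter (fun d => lo ≤ d.1 ∧ d.1 < α) := by
      rw [Finset.filter_insert, if_neg (by omega : ¬ (lo ≤ c.1 ∧ c.1 < α))]
    have hYlet : ∀ a ∈ eword (T.filter fun d => lo ≤ d.1 ∧ d.1 < α) α, a + 1 < α :=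
      low_letters_bound ht (le_refl α) (fun d hd hl _ => h1 d hd hl)
    have hYcomm := permOf_comm_swap hYlet
    obtain ⟨Xlt, Xmid, Xtop, Xgt⟩ := cperm_spec α (colCard T α)
    set A := permOf (eword (res T (α+1)) N) with hA
    set A2 := permOf (eword (res (insert c T) (α+1)) N) with hA2d
    set X := permOf (List.range' α (colCard T α)) with hX
    set Y := permOf (eword (T.filter fun d => lo ≤ d.1 ∧ d.1 < α) α) with hY
    have hconj : Equiv.swap (α+1) (α+2) * X = X * Equiv.swap α (α+1) :=
      swap_cperm (le_refl α) (by omega)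
    have hA2 : A2 = A * Equiv.swap (α+1) (α+2) := hA'
    have ePT : permOf (eword (res T lo) N) = A * X * Y := by
      rw [hT, permOf_append, permOf_append]
    have ePT' : permOf (eword (res (insert c T) lo) N) = A2 * X * Y := by
      rw [hT', e2, e3, permOf_append, permOf_append]
    constructor
    · rw [ePT, ePT', hA2, mul_assoc A, hconj, ← mul_assoc A X, mul_assoc (A * X),
        ← hYcomm, ← mul_assoc]
    · rw [ePT]
      have hYα : Y α = α := permOf_fix_big hYlet (le_refl _)
      have hYα1 : Y (α+1) = α+1 := permOf_fix_big hYlet (by omega)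
      have hXα : X α = α + 1 := Xmid α (le_refl _) (by omega)
      have hXα1 : X (α+1) = α + 2 := Xmid (α+1) (by omega) (by omega)
      simp only [Equiv.Perm.mul_apply]
      rw [hYα, hYα1, hXα, hXα1]
      exact hAasc
  | s2a lo α i j hmem hloi hdiag hmin htop =>
    intro hα hlo
    have h1i : 1 ≤ i := (ht _ hmem).1
    have hcol : colCard T i = j + 1 := by
      have g1 := (tower_mem_iff ht).1 hmem
      have g2 : ¬ (j + 1 < colCard T i) := fun h => htop ((tower_mem_iff ht).2 h)
      omega
    have htow' : IsTowerDiagram (insert (i, j+1) T) := by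
      intro d hd
      rcases Finset.mem_insert.1 hd with rfl | hd
      · refine ⟨h1i, fun j' hj' => ?_⟩
        rcases eq_or_lt_of_le hj' with rfl | hj'
        · exact Finset.mem_insert_self _ _
        · exact Finset.mem_insert_of_mem ((ht _ hmem).2 j' (by omega))
      · obtain ⟨g1, g2⟩ := ht d hd
        exact ⟨g1, fun j' hj' => Finset.mem_insert_of_mem (g2 j' hj')⟩
    refine ⟨⟨(i, j+1), htop, hloi, rfl⟩, htow', ?_⟩
    intro N hN
    have hiN : i + 1 ≤ N := hN (i, j+1) (Finset.mem_insert_self _ _)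
    have hT := eword_res_split (T := T) (lo := lo) (β := i) hloi hiN
    have hT' := eword_res_split (T := insert (i, j+1) T) (lo := lo) (β := i) hloi hiN
    rw [hcol] at hT
    have e1 : res (insert (i, j+1) T) (i+1) = res T (i+1) := by
      rw [res, Finset.filter_insert, if_neg (by omega : ¬ i + 1 ≤ ((i, j+1) : Cell).1)]
      rfl
    have e2 : colCard (insert (i, j+1) T) i = j + 2 := by
      rw [colCard, Finset.filter_insert, if_pos rfl,
        Finset.card_insert_of_notMem (fun hm => htop (Finset.mem_filter.1 hm).1)]
      have hc2 : (T.filter fun d => d.1 = i).card = j + 1 := hcol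
      omega
    have e3 : (insert (i, j+1) T).filter (fun d => lo ≤ d.1 ∧ d.1 < i)
        = T.filter (fun d => lo ≤ d.1 ∧ d.1 < i) := by
      rw [Finset.filter_insert, if_neg (fun h => absurd h.2 (lt_irrefl i))]
    have hWlet : ∀ a ∈ eword (T.filter fun d => lo ≤ d.1 ∧ d.1 < i) i, a + 1 < α :=
      low_letters_bound ht (by omega) (fun d hd hl hi' heq => by
        have := hmin d hd hl heq; omega)
    have hWcomm := permOf_comm_swap hWlet
    have hX' : List.range' i (j+2) = List.range' i (j+1) ++ [i + (j+1)] := by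
      simpa using List.range'_concat (s := i) (n := j+1) (step := 1)
    obtain ⟨Xlt, Xmid, Xtop, Xgt⟩ := cperm_spec i (j+1)
    set B := permOf (eword (res T (i+1)) N) with hB
    set X := permOf (List.range' i (j+1)) with hX
    set W := permOf (eword (T.filter fun d => lo ≤ d.1 ∧ d.1 < i) i) with hW
    have hBlet : ∀ a ∈ eword (res T (i+1)) N, i + 1 ≤ a := fun a ha => res_letters ha
    have hsw : Equiv.swap (i + (j+1)) (i + (j+1) + 1) = Equiv.swap α (α+1) := by
      rw [show i + (j+1) = α by omega]
    have ePT : permOf (eword (res T lo) N) = B * X * W := by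
      rw [hT, permOf_append, permOf_append]
    have ePT' : permOf (eword (res (insert (i, j+1) T) lo) N)
        = B * (X * Equiv.swap α (α+1)) * W := by
      rw [hT', e1, e2, e3, hX', permOf_append, permOf_append, permOf_append,
        permOf_singleton, hsw]
    constructor
    · rw [ePT, ePT', ← mul_assoc B X, mul_assoc (B * X), ← hWcomm, ← mul_assoc]
    · rw [ePT]
      have hWα : W α = α := permOf_fix_big hWlet (le_refl _)
      have hWα1 : W (α+1) = α+1 := permOf_fix_big hWlet (by omega)
      have hXα : X α = i := by rw [show α = i + (j+1) by omega]; exact Xtop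
      have hXα1 : X (α+1) = α + 1 := Xgt (α+1) (by omega)
      have hBi : B i = i := permOf_fix_lt hBlet (by omega)
      have hB1 : i + 1 ≤ B (α+1) := permOf_ge hBlet (by omega)
      simp only [Equiv.Perm.mul_apply]
      rw [hWα, hWα1, hXα, hXα1, hBi]
      omega
  | s2c lo α i j T' hmem hloi hdiag hmin h1 h2 hrec ih =>
    intro hα hlo
    obtain ⟨⟨c, hcm, hclo, rfl⟩, htow', hperm'⟩ := ih (by omega) (by omega)
    have hcol : j + 3 ≤ colCard T i := by
      have := (tower_mem_iff ht).1 h2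
      omega
    refine ⟨⟨c, hcm, by omega, rfl⟩, htow', ?_⟩
    intro N hN
    have hiN : i + 1 ≤ N := hN (i, j) (Finset.mem_insert_of_mem hmem)
    obtain ⟨hA', hAasc⟩ := hperm' N hN
    have hT := eword_res_split (T := T) (lo := lo) (β := i) hloi hiN
    have hT' := eword_res_split (T := insert c T) (lo := lo) (β := i) hloi hiN
    have e2 : colCard (insert c T) i = colCard T i := by
      rw [colCard, Finset.filter_insert, if_neg (by omega : ¬ c.1 = i)]
      rfl
    have e3 : (insert c T).filter (fun d => lo ≤ d.1 ∧ d.1 < i)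
        = T.filter (fun d => lo ≤ d.1 ∧ d.1 < i) := by
      rw [Finset.filter_insert, if_neg (by omega : ¬ (lo ≤ c.1 ∧ c.1 < i))]
    have hWlet : ∀ a ∈ eword (T.filter fun d => lo ≤ d.1 ∧ d.1 < i) i, a + 1 < α :=
      low_letters_bound ht (by omega) (fun d hd hl hi' heq => by
        have := hmin d hd hl heq; omega)
    have hWcomm := permOf_comm_swap hWlet
    obtain ⟨Xlt, Xmid, Xtop, Xgt⟩ := cperm_spec i (colCard T i)
    set A := permOf (eword (res T (i+1)) N) with hA
    set A2 := permOf (eword (res (insert c T) (i+1)) N) with hA2d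
    set X := permOf (List.range' i (colCard T i)) with hX
    set W := permOf (eword (T.filter fun d => lo ≤ d.1 ∧ d.1 < i) i) with hW
    have hconj : Equiv.swap (α+1) (α+2) * X = X * Equiv.swap α (α+1) :=
      swap_cperm (by omega) (by omega)
    have hA2 : A2 = A * Equiv.swap (α+1) (α+2) := hA'
    have ePT : permOf (eword (res T lo) N) = A * X * W := by
      rw [hT, permOf_append, permOf_append]
    have ePT' : permOf (eword (res (insert c T) lo) N) = A2 * X * W := by
      rw [hT', e2, e3, permOf_append, permOf_append]
    constructor
    · rw [ePT, ePT', hA2, mul_assoc A, hconj, ← mul_assoc A X, mul_assoc (A * X),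
        ← hWcomm, ← mul_assoc]
    · rw [ePT]
      have hWα : W α = α := permOf_fix_big hWlet (le_refl _)
      have hWα1 : W (α+1) = α+1 := permOf_fix_big hWlet (by omega)
      have hXα : X α = α + 1 := Xmid α (by omega) (by omega)
      have hXα1 : X (α+1) = α + 2 := Xmid (α+1) (by omega) (by omega)
      simp only [Equiv.Perm.mul_apply]
      rw [hWα, hWα1, hXα, hXα1]
      exact hAasc

end TD
namespace TD

lemma colCard_empty (i : ℕ) : colCard (∅ : Finset Cell) i = 0 := by
  simp [colCard]

lemma phi_empty : phi (∅ : Finset Cell) = 1 := by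
  rw [phi, eword_nil fun i _ => colCard_empty i]
  rfl

lemma srd_props {w : List ℕ} {T : Finset Cell} (h : SRDiagram w T) (hw : IsPosWord w) :
    IsTowerDiagram T ∧ T.card = w.length ∧ phi T = permOf w ∧
      (∀ M, (∀ a ∈ w, a + 1 < M) → invF (permOf w) M = w.length) := by
  induction h with
  | nil =>
    refine ⟨fun c hc => absurd hc (Finset.notMem_empty c), rfl, ?_, ?_⟩
    · rw [phi_empty]; rfl
    · intro M _
      rw [show permOf [] = 1 from rfl, invF_one]
      rfl
  | @snoc w T T' a hw0 ha ih =>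
    have hwpos : IsPosWord w := fun b hb => hw b (by simp [hb])
    have hapos : 1 ≤ a := hw a (by simp)
    obtain ⟨ht, hcard, hphi, hinv⟩ := ih hwpos
    obtain ⟨⟨c, hcm, -, rfl⟩, htow', hperm⟩ :=
      slide_main ht ha hapos (Nat.zero_le _)
    have hNall : ∀ d ∈ insert c T, d.1 < bnd (insert c T) := fun d hd => cell_lt_bnd hd
    obtain ⟨hmul, hasc⟩ := hperm (bnd (insert c T)) hNall
    rw [res_zero, res_zero] at hmul
    rw [res_zero] at hasc
    have hTN : permOf (eword T (bnd (insert c T))) = phi T :=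
      phi_eq fun d hd => hNall d (Finset.mem_insert_of_mem hd)
    have hphi' : phi (insert c T) = permOf (w ++ [a]) := by
      rw [← phi_eq hNall, hmul, hTN, hphi, permOf_append, permOf_singleton]
    have hasc' : permOf w a < permOf w (a + 1) := by
      rw [← hphi, ← hTN]
      exact hasc
    refine ⟨htow', ?_, hphi', ?_⟩
    · rw [Finset.card_insert_of_notMem hcm, hcard, List.length_append]
      rfl
    · intro M hM
      have haM : a + 1 < M := hM a (by simp)
      rw [permOf_append, permOf_singleton, invF_mul_swap _ haM, if_pos hasc',
        hinv M (fun b hb => hM b (by simp [hb])), List.length_append]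
      rfl

lemma eword_min_split {T : Finset Cell} {N : ℕ}
    {i0 : ℕ} (hmin : ∀ c ∈ T, i0 ≤ c.1) (hi0N : i0 + 1 ≤ N) :
    eword T N = eword (T.filter fun c => i0 + 1 ≤ c.1) N
      ++ List.range' i0 (colCard T i0) := by
  have h1 := eword_split T hi0N
  have e2 : eword (T.filter fun c => c.1 < i0 + 1) (i0 + 1)
      = List.range' i0 (colCard T i0) := by
    rw [show eword (T.filter fun c => c.1 < i0 + 1) (i0+1)
      = List.range' i0 (colCard (T.filter fun c => c.1 < i0 + 1) i0)
        ++ eword (T.filter fun c => c.1 < i0 + 1) i0 from rfl]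
    rw [colCard_filter_imp (fun c hc => by omega)]
    have hz : ∀ k, k < i0 → colCard (T.filter fun c => c.1 < i0 + 1) k = 0 := by
      intro k hk
      rw [colCard, Finset.card_eq_zero, Finset.filter_eq_empty_iff]
      intro c hc he
      rw [Finset.mem_filter] at hc
      have := hmin c hc.1
      omega
    rw [eword_nil (fun k hk => hz k hk), List.append_nil]
  rw [h1, e2]

lemma eword_snoc_top {T : Finset Cell} (ht : IsTowerDiagram T) {N i0 : ℕ}
    (hN : ∀ c ∈ T, c.1 < N)
    (hmin : ∀ c ∈ T, i0 ≤ c.1) (hcol : colCard T i0 ≠ 0) :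
    eword T N = eword (T.erase (i0, colCard T i0 - 1)) N
      ++ [i0 + (colCard T i0 - 1)] := by
  set h := colCard T i0 with hh
  have htop : ((i0, h - 1) : Cell) ∈ T := (tower_mem_iff ht).2 (by omega)
  set top : Cell := (i0, h - 1) with htopd
  set T0 := T.erase top with hT0
  have hT0sub : T0 ⊆ T := Finset.erase_subset _ _
  have hi0N : i0 + 1 ≤ N := hN _ htop
  have htopfil : top ∈ T.filter fun c => c.1 = i0 := Finset.mem_filter.2 ⟨htop, rfl⟩
  have hcol0 : colCard T0 i0 = h - 1 := by
    rw [hT0, colCard, Finset.filter_erase, Finset.card_erase_of_mem htopfil]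
    rfl
  have hfil0 : (T0.filter fun c => i0 + 1 ≤ c.1) = T.filter fun c => i0 + 1 ≤ c.1 := by
    rw [hT0, Finset.filter_erase, Finset.erase_eq_of_notMem]
    intro hm
    rw [Finset.mem_filter] at hm
    have : top.1 = i0 := rfl
    omega
  have hsplit := eword_min_split hmin hi0N
  have hsplit0 := eword_min_split (T := T0) (fun c hc => hmin c (hT0sub hc)) hi0N
  rw [hsplit0, hfil0, hcol0] at *
  rw [hsplit]
  rw [List.append_assoc]
  congr 1
  have hrc : List.range' i0 h = List.range' i0 (h-1) ++ [i0 + (h-1)] := by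
    have := List.range'_concat (s := i0) (n := h - 1) (step := 1)
    simp only [one_mul] at this
    rw [show h - 1 + 1 = h by omega] at this
    exact this
  rw [hrc]

end TD
namespace TD

lemma eword_srd : ∀ n (T : Finset Cell), T.card = n → IsTowerDiagram T →
    ∀ N, (∀ c ∈ T, c.1 < N) → SRDiagram (eword T N) T := by
  intro n
  induction n using Nat.strong_induction_on with
  | _ n ih =>
    intro T hcard ht N hN
    rcases Finset.eq_empty_or_nonempty T with rfl | hne
    · rw [eword_nil fun i _ => colCard_empty i]
      exact SRDiagram.nil
    have hIne : (T.image Prod.fst).Nonempty := hne.image _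
    set i0 := (T.image Prod.fst).min' hIne with hi0
    have hmin : ∀ c ∈ T, i0 ≤ c.1 := fun c hc =>
      Finset.min'_le _ _ (Finset.mem_image_of_mem _ hc)
    have hi0mem : ∃ j, ((i0, j) : Cell) ∈ T := by
      have hm := Finset.min'_mem (T.image Prod.fst) hIne
      rw [Finset.mem_image] at hm
      obtain ⟨⟨c1, c2⟩, hc, hceq⟩ := hm
      exact ⟨c2, by rw [hi0, ← hceq]; exact hc⟩
    have hcol : colCard T i0 ≠ 0 := by
      obtain ⟨j, hj⟩ := hi0mem
      have := (tower_mem_iff ht).1 hj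
      omega
    set h := colCard T i0 with hh
    have htopmem : ((i0, h - 1) : Cell) ∈ T := (tower_mem_iff ht).2 (by omega)
    set top : Cell := (i0, h - 1) with htopd
    set T0 := T.erase top with hT0
    have hT0sub : T0 ⊆ T := Finset.erase_subset _ _
    have htow0 : IsTowerDiagram T0 := by
      intro d hd
      have hdT := hT0sub hd
      obtain ⟨g1, g2⟩ := ht d hdT
      refine ⟨g1, fun j' hj' => ?_⟩
      rw [hT0, Finset.mem_erase]
      refine ⟨?_, g2 j' hj'⟩
      intro he
      have hd1 : d.1 = i0 := congrArg Prod.fst he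
      have hd2 : j' = h - 1 := congrArg Prod.snd he
      have hdmem : ((i0, d.2) : Cell) ∈ T := by rw [← hd1]; exact hdT
      have hdc : d.2 < h := (tower_mem_iff ht).1 hdmem
      have hde : d = top := by
        rw [htopd]
        apply Prod.ext <;> omega
      exact (Finset.mem_erase.1 hd).1 hde
    have hnpos : 1 ≤ n := by
      rw [← hcard]
      exact Finset.card_pos.2 hne
    have hcard0 : T0.card = n - 1 := by
      rw [hT0, Finset.card_erase_of_mem htopmem, hcard]
    have hword := eword_snoc_top ht hN hmin hcol
    have hsr0 : SRDiagram (eword T0 N) T0 :=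
      ih (n-1) (by omega) T0 hcard0 htow0 N (fun c hc => hN c (hT0sub hc))
    have hT0min : ∀ c ∈ T0, i0 ≤ c.1 := fun c hc => hmin c (hT0sub hc)
    have hslide : Slides T0 (i0 + (h-1)) T := by
      rcases eq_or_lt_of_le (show 1 ≤ h by omega) with heq | hlt
      · have hh1 : h = 1 := heq.symm
        have hα : i0 + (h - 1) = i0 := by omega
        rw [hα]
        have htopeq : ((i0, 0) : Cell) = top := by
          rw [htopd]
          congr 1
          omega
        have hres : insert ((i0 : ℕ), (0 : ℕ)) T0 = T := by
          rw [htopeq, hT0, Finset.insert_erase htopmem]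
        rw [Slides, ← hres]
        apply SlideAux.s1a
        · intro c hc _
          have := hT0min c hc
          omega
        · intro c hc _ hsum
          have hc1 : c.1 = i0 := by have := hT0min c hc; omega
          have hc2 : c.2 = 0 := by omega
          have hce : c = top := by
            rw [htopd]
            apply Prod.ext <;> omega
          exact (Finset.mem_erase.1 hc).1 hce
      · have htopeq : ((i0, (h-2)+1) : Cell) = top := by
          rw [htopd]
          congr 1
          omega
        have hres : insert ((i0 : ℕ), (h-2)+1) T0 = T := by
          rw [htopeq, hT0, Finset.insert_erase htopmem]
        rw [Slides, ← hres]
        apply SlideAux.s2a (i := i0) (j := h - 2)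
        · rw [hT0, Finset.mem_erase]
          constructor
          · intro he
            have := congrArg Prod.snd he
            simp only [htopd] at this
            omega
          · exact (tower_mem_iff ht).2 (by omega)
        · exact Nat.zero_le _
        · omega
        · intro c hc _ _
          exact hT0min c hc
        · rw [htopeq, hT0]
          exact Finset.notMem_erase _ _
    have := SRDiagram.snoc hsr0 hslide
    rwa [← hword] at this

end TD
namespace TD

lemma tower_filter {T : Finset Cell} (ht : IsTowerDiagram T) (lo : ℕ) :
    IsTowerDiagram (T.filter fun c => lo ≤ c.1) := by
  intro c hc
  rw [Finset.mem_filter] at hc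
  obtain ⟨g1, g2⟩ := ht c hc.1
  exact ⟨g1, fun j' hj' => Finset.mem_filter.2 ⟨g2 j' hj', hc.2⟩⟩

lemma phi_facts {T : Finset Cell} (ht : IsTowerDiagram T) (hne : T.Nonempty) :
    ∃ i0 h, h ≠ 0 ∧ (∀ c ∈ T, i0 ≤ c.1) ∧ h = colCard T i0 ∧
      (∀ x < i0, phi T x = x) ∧ (i0 < phi T i0) ∧ (phi T (i0 + h) = i0) ∧
      phi (T.filter fun c => i0 + 1 ≤ c.1) = phi T * (permOf (List.range' i0 h))⁻¹ := by
  have hIne : (T.image Prod.fst).Nonempty := hne.image _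
  set i0 := (T.image Prod.fst).min' hIne with hi0
  have hmin : ∀ c ∈ T, i0 ≤ c.1 := fun c hc =>
    Finset.min'_le _ _ (Finset.mem_image_of_mem _ hc)
  have hi0mem : ∃ j, ((i0, j) : Cell) ∈ T := by
    have hm := Finset.min'_mem (T.image Prod.fst) hIne
    rw [Finset.mem_image] at hm
    obtain ⟨⟨c1, c2⟩, hc, hceq⟩ := hm
    exact ⟨c2, by rw [hi0, ← hceq]; exact hc⟩
  set h := colCard T i0 with hh
  have hcol : h ≠ 0 := by
    obtain ⟨j, hj⟩ := hi0mem
    have := (tower_mem_iff ht).1 hj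
    omega
  have htopmem : ((i0, h - 1) : Cell) ∈ T := (tower_mem_iff ht).2 (by omega)
  set N := bnd T with hNd
  have hN : ∀ c ∈ T, c.1 < N := fun c hc => cell_lt_bnd hc
  have hi0N : i0 + 1 ≤ N := hN _ htopmem
  have hsplit := eword_min_split (T := T) hmin hi0N
  obtain ⟨Xlt, Xmid, Xtop, Xgt⟩ := cperm_spec i0 h
  set X := permOf (List.range' i0 h) with hX
  set A := permOf (eword (T.filter fun c => i0 + 1 ≤ c.1) N) with hA
  have hphiT : phi T = A * X := by
    rw [phi, ← hNd, hsplit, permOf_append, ← hh]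
  have hsubcells : ∀ c ∈ T.filter fun c => i0 + 1 ≤ c.1, c.1 < N := fun c hc =>
    hN c (Finset.mem_filter.1 hc).1
  have hAphi : A = phi (T.filter fun c => i0 + 1 ≤ c.1) := by
    rw [hA, phi_eq hsubcells]
  have hres : res T (i0 + 1) = T.filter fun c => i0 + 1 ≤ c.1 := rfl
  have hAlet : ∀ a ∈ eword (T.filter fun c => i0 + 1 ≤ c.1) N, i0 + 1 ≤ a := by
    intro a ha
    rw [← hres] at ha
    exact res_letters ha
  refine ⟨i0, h, hcol, hmin, hh, ?_, ?_, ?_, ?_⟩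
  · intro x hx
    rw [hphiT, Equiv.Perm.mul_apply, Xlt x hx]
    exact permOf_fix_lt hAlet (by omega)
  · rw [hphiT, Equiv.Perm.mul_apply, Xmid i0 (le_refl _) (by omega)]
    have hge : i0 + 1 ≤ A (i0 + 1) := permOf_ge hAlet (le_refl _)
    omega
  · rw [hphiT, Equiv.Perm.mul_apply, Xtop]
    exact permOf_fix_lt hAlet (by omega)
  · rw [← hAphi, hphiT, mul_assoc, mul_inv_cancel, mul_one]

lemma tower_recon {T : Finset Cell} (ht : IsTowerDiagram T) {i0 h : ℕ}
    (hmin : ∀ c ∈ T, i0 ≤ c.1) (hcol : h = colCard T i0) :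
    T = (T.filter fun c => i0 + 1 ≤ c.1)
      ∪ (Finset.range h).image (fun j => ((i0, j) : Cell)) := by
  ext c
  rw [Finset.mem_union, Finset.mem_filter]
  constructor
  · intro hc
    rcases le_or_gt (i0 + 1) c.1 with hle | hlt
    · exact Or.inl ⟨hc, hle⟩
    · have hc1 : c.1 = i0 := by have := hmin c hc; omega
      have hcm : ((i0, c.2) : Cell) ∈ T := by rw [← hc1]; exact hc
      have hlt2 : c.2 < h := by rw [hcol]; exact (tower_mem_iff ht).1 hcm
      refine Or.inr (Finset.mem_image.2 ⟨c.2, Finset.mem_range.2 hlt2, ?_⟩)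
      apply Prod.ext
      · exact hc1.symm
      · rfl
  · rintro (⟨hc, -⟩ | hc)
    · exact hc
    · obtain ⟨j, hj, rfl⟩ := Finset.mem_image.1 hc
      rw [Finset.mem_range] at hj
      exact (tower_mem_iff ht).2 (by omega)

lemma phi_inj : ∀ n (T T' : Finset Cell), T.card = n → IsTowerDiagram T →
    IsTowerDiagram T' → phi T = phi T' → T = T' := by
  intro n
  induction n using Nat.strong_induction_on with
  | _ n ih =>
    intro T T' hcard ht ht' hphi
    rcases Finset.eq_empty_or_nonempty T with rfl | hne
    · rcases Finset.eq_empty_or_nonempty T' with rfl | hne'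
      · rfl
      · exfalso
        obtain ⟨i0', h', _, _, _, _, hgt', _, _⟩ := phi_facts ht' hne'
        rw [← hphi, phi_empty] at hgt'
        simp at hgt'
    rcases Finset.eq_empty_or_nonempty T' with rfl | hne'
    · exfalso
      obtain ⟨i0, h, _, _, _, _, hgt, _, _⟩ := phi_facts ht hne
      rw [hphi, phi_empty] at hgt
      simp at hgt
    obtain ⟨i0, h, hh0, hmin, hcol, hfix, hgt, htop, hsub⟩ := phi_facts ht hne
    obtain ⟨i0', h', hh0', hmin', hcol', hfix', hgt', htop', hsub'⟩ := phi_facts ht' hne'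
    have hi0eq : i0 = i0' := by
      rcases lt_trichotomy i0 i0' with hlt | heq | hgt2
      · have := hfix' i0 hlt
        rw [← hphi] at this
        omega
      · exact heq
      · have := hfix i0' hgt2
        rw [hphi] at this
        omega
    subst hi0eq
    have hheq : h = h' := by
      have he : phi T (i0 + h) = phi T (i0 + h') := by rw [htop, hphi, htop']
      have := (phi T).injective he
      omega
    subst hheq
    have hsub2 : phi (T.filter fun c => i0 + 1 ≤ c.1)
        = phi (T'.filter fun c => i0 + 1 ≤ c.1) := by
      rw [hsub, hsub', hphi]
    have hbot : ((i0, 0) : Cell) ∈ T := (tower_mem_iff ht).2 (by omega)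
    have hcardlt : (T.filter fun c => i0 + 1 ≤ c.1).card < n := by
      have hle := Finset.card_filter_le T (fun c => i0 + 1 ≤ c.1)
      have hss : (T.filter fun c => i0 + 1 ≤ c.1) ⊂ T :=
        Finset.filter_ssubset.2 ⟨(i0, 0), hbot, by omega⟩
      have := Finset.card_lt_card hss
      omega
    have hrec := ih _ hcardlt _ _ rfl (tower_filter ht _) (tower_filter ht' _) hsub2
    rw [tower_recon ht hmin hcol, tower_recon ht' hmin' hcol', hrec]

end TD
namespace TD

lemma res_split_apply {T : Finset Cell} (ht : IsTowerDiagram T) {lo β α N : ℕ}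
    (hlo : lo ≤ β) (hβα : β ≤ α) (hβN : β + 1 ≤ N)
    (hd : ∀ c ∈ T, lo ≤ c.1 → c.1 < β → c.1 + c.2 + 1 ≠ α) {x : ℕ} (hx : α ≤ x) :
    permOf (eword (res T lo) N) x
      = permOf (eword (res T (β+1)) N) (permOf (List.range' β (colCard T β)) x) := by
  rw [eword_res_split hlo hβN, permOf_append, permOf_append]
  simp only [Equiv.Perm.mul_apply]
  rw [permOf_fix_big (low_letters_bound ht hβα hd) hx]

lemma slide_exists : ∀ n {T : Finset Cell} {lo α : ℕ}, (res T lo).card = n →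
    IsTowerDiagram T → 1 ≤ α → lo ≤ α →
    (∀ N, (∀ d ∈ T, d.1 < N) →
      permOf (eword (res T lo) N) α < permOf (eword (res T lo) N) (α+1)) →
    ∃ T', SlideAux T lo α T' := by
  intro n
  induction n using Nat.strong_induction_on with
  | _ n ih =>
    intro T lo α hcard ht hα hlo hasc
    classical
    have hNall : ∀ d ∈ T, d.1 < bnd T := fun d hd => cell_lt_bnd hd
    by_cases hdiag : ∃ c ∈ T, lo ≤ c.1 ∧ c.1 + c.2 + 1 = α
    case neg =>
      push_neg at hdiag
      by_cases hsum : ∃ c ∈ T, lo ≤ c.1 ∧ c.1 + c.2 = α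
      case neg =>
        push_neg at hsum
        exact ⟨_, SlideAux.s1a lo α (fun c hc h => hdiag c hc h) (fun c hc h => hsum c hc h)⟩
      case pos =>
        obtain ⟨c, hcm, hclo, hcsum⟩ := hsum
        have hc2 : c.2 = 0 := by
          by_contra h2
          have hcell : (c.1, c.2 - 1) ∈ T := (ht c hcm).2 _ (by omega)
          exact hdiag _ hcell hclo (by omega)
        have hcα : c = ((α, 0) : Cell) := Prod.ext (by omega) hc2
        have hα0 : ((α, 0) : Cell) ∈ T := hcα ▸ hcm
        have hd' : ∀ c ∈ T, lo ≤ c.1 → c.1 < α → c.1 + c.2 + 1 ≠ α :=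
          fun c hc h1 _ => hdiag c hc h1
        by_cases hα1 : ((α, 1) : Cell) ∈ T
        · -- s1c, recurse
          have hcol2 : 2 ≤ colCard T α := by
            have := (tower_mem_iff ht).1 hα1
            omega
          have hsub : res T (α+1) ⊆ res T lo := by
            intro d hd
            rw [res, Finset.mem_filter] at hd ⊢
            exact ⟨hd.1, by omega⟩
          have hnotsub : ¬ res T lo ⊆ res T (α+1) := by
            intro hcon
            have h1 : ((α, 0) : Cell) ∈ res T lo := Finset.mem_filter.2 ⟨hα0, hlo⟩
            have h2 := hcon h1
            rw [res, Finset.mem_filter] at h2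
            omega
          have hsslt : (res T (α+1)).card < n := by
            rw [← hcard]
            exact Finset.card_lt_card ⟨hsub, hnotsub⟩
          have hasc' : ∀ N, (∀ d ∈ T, d.1 < N) →
              permOf (eword (res T (α+1)) N) (α+1)
                < permOf (eword (res T (α+1)) N) (α+1+1) := by
            intro N hN
            have hαN : α + 1 ≤ N := hN _ hα0
            obtain ⟨Xlt, Xmid, Xtop, Xgt⟩ := cperm_spec α (colCard T α)
            have e1 := res_split_apply ht hlo (le_refl α) hαN hd' (le_refl α)
            have e2 := res_split_apply ht hlo (le_refl α) hαN hd'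
              (show α ≤ α + 1 by omega)
            rw [Xmid α (le_refl _) (by omega)] at e1
            rw [Xmid (α+1) (by omega) (by omega)] at e2
            have h3 := hasc N hN
            rw [e1, e2] at h3
            exact h3
          obtain ⟨T'', hT''⟩ := ih _ hsslt rfl ht (by omega) (le_refl _) hasc'
          exact ⟨T'', SlideAux.s1c lo α T'' (fun c hc h => hdiag c hc h) hα0 hlo hα1 hT''⟩
        · -- terminal, contradiction
          exfalso
          have hcol1 : colCard T α = 1 := by
            have h1 := (tower_mem_iff ht).1 hα0
            have h2 : ¬ (1 < colCard T α) := fun h => hα1 ((tower_mem_iff ht).2 h)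
            omega
          have hαN : α + 1 ≤ bnd T := hNall _ hα0
          obtain ⟨Xlt, Xmid, Xtop, Xgt⟩ := cperm_spec α (colCard T α)
          have e1 := res_split_apply ht hlo (le_refl α) hαN hd' (le_refl α)
          have e2 := res_split_apply ht hlo (le_refl α) hαN hd'
            (show α ≤ α + colCard T α by omega)
          rw [Xmid α (le_refl _) (by omega)] at e1
          rw [Xtop] at e2
          have hx : α + 1 = α + colCard T α := by omega
          have h3 := hasc (bnd T) hNall
          rw [hx, e1, e2] at h3
          have hAlet : ∀ a ∈ eword (res T (α+1)) (bnd T), α + 1 ≤ a :=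
            fun a ha => res_letters ha
          have g1 : permOf (eword (res T (α+1)) (bnd T)) α = α :=
            permOf_fix_lt hAlet (by omega)
          have g2 : α + 1 ≤ permOf (eword (res T (α+1)) (bnd T)) (α + 1) :=
            permOf_ge hAlet (by omega)
          omega
    case pos =>
      obtain ⟨c0, hc0m, hc0lo, hc0sum⟩ := hdiag
      set D := T.filter (fun c => lo ≤ c.1 ∧ c.1 + c.2 + 1 = α) with hD
      have hDne : D.Nonempty := ⟨c0, Finset.mem_filter.2 ⟨hc0m, hc0lo, hc0sum⟩⟩
      have hIne : (D.image Prod.fst).Nonempty := hDne.image _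
      set i := (D.image Prod.fst).min' hIne with hi
      have hminD : ∀ c ∈ T, lo ≤ c.1 → c.1 + c.2 + 1 = α → i ≤ c.1 := fun c hc g1 g2 =>
        Finset.min'_le _ _ (Finset.mem_image_of_mem _ (Finset.mem_filter.2 ⟨hc, g1, g2⟩))
      obtain ⟨j, hjD⟩ : ∃ j, ((i, j) : Cell) ∈ D := by
        have hm := Finset.min'_mem (D.image Prod.fst) hIne
        rw [Finset.mem_image] at hm
        obtain ⟨⟨c1, c2⟩, hc, hceq⟩ := hm
        exact ⟨c2, by rw [hi, ← hceq]; exact hc⟩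
      rw [hD, Finset.mem_filter] at hjD
      obtain ⟨hij, hilo0, hdiageq0⟩ := hjD
      have hilo : lo ≤ i := hilo0
      have hdiageq : i + j + 1 = α := hdiageq0
      have hd' : ∀ c ∈ T, lo ≤ c.1 → c.1 < i → c.1 + c.2 + 1 ≠ α :=
        fun c hc g1 g2 heq => by have := hminD c hc g1 heq; omega
      have hiα : i + 1 ≤ α := by omega
      by_cases h1 : ((i, j+1) : Cell) ∈ T
      · by_cases h2 : ((i, j+2) : Cell) ∈ T
        · -- s2c recurse
          have hcol3 : j + 3 ≤ colCard T i := by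
            have := (tower_mem_iff ht).1 h2
            omega
          have hsub : res T (i+1) ⊆ res T lo := by
            intro d hd
            rw [res, Finset.mem_filter] at hd ⊢
            exact ⟨hd.1, by omega⟩
          have hnotsub : ¬ res T lo ⊆ res T (i+1) := by
            intro hcon
            have g1 : ((i, j) : Cell) ∈ res T lo := Finset.mem_filter.2 ⟨hij, hilo⟩
            have g2 := hcon g1
            rw [res, Finset.mem_filter] at g2
            omega
          have hsslt : (res T (i+1)).card < n := by
            rw [← hcard]
            exact Finset.card_lt_card ⟨hsub, hnotsub⟩
          have hasc' : ∀ N, (∀ d ∈ T, d.1 < N) →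
              permOf (eword (res T (i+1)) N) (α+1)
                < permOf (eword (res T (i+1)) N) (α+1+1) := by
            intro N hN
            have hiN : i + 1 ≤ N := hN _ hij
            obtain ⟨Xlt, Xmid, Xtop, Xgt⟩ := cperm_spec i (colCard T i)
            have e1 := res_split_apply ht hilo (by omega : i ≤ α) hiN hd'
              (le_refl α)
            have e2 := res_split_apply ht hilo (by omega : i ≤ α) hiN hd'
              (show α ≤ α + 1 by omega)
            rw [Xmid α (by omega) (by omega)] at e1
            rw [Xmid (α+1) (by omega) (by omega)] at e2
            have h3 := hasc N hN
            rw [e1, e2] at h3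
            exact h3
          obtain ⟨T'', hT''⟩ := ih _ hsslt rfl ht (by omega) (by omega) hasc'
          exact ⟨T'', SlideAux.s2c lo α i j T'' hij hilo hdiageq hminD h1 h2 hT''⟩
        · -- terminal, contradiction
          exfalso
          have hcol2 : colCard T i = j + 2 := by
            have g1 := (tower_mem_iff ht).1 h1
            have g2 : ¬ (j + 2 < colCard T i) := fun h => h2 ((tower_mem_iff ht).2 h)
            omega
          have hiN : i + 1 ≤ bnd T := hNall _ hij
          obtain ⟨Xlt, Xmid, Xtop, Xgt⟩ := cperm_spec i (colCard T i)
          have e1 := res_split_apply ht hilo (by omega : i ≤ α) hiN hd' (le_refl α)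
          have e2 := res_split_apply ht hilo (by omega : i ≤ α) hiN hd'
            (show α ≤ i + colCard T i by omega)
          rw [Xmid α (by omega) (by omega)] at e1
          rw [Xtop] at e2
          have hx : α + 1 = i + colCard T i := by omega
          have h3 := hasc (bnd T) hNall
          rw [hx, e1, e2] at h3
          have hAlet : ∀ a ∈ eword (res T (i+1)) (bnd T), i + 1 ≤ a :=
            fun a ha => res_letters ha
          have g1 : permOf (eword (res T (i+1)) (bnd T)) i = i :=
            permOf_fix_lt hAlet (by omega)
          have g2 : i + 1 ≤ permOf (eword (res T (i+1)) (bnd T)) (α + 1) :=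
            permOf_ge hAlet (by omega)
          omega
      · exact ⟨_, SlideAux.s2a lo α i j hij hilo hdiageq hminD h1⟩

end TD
namespace TD

lemma phi_surj : ∀ n (σ : Equiv.Perm ℕ) (M : ℕ), (∀ x, M ≤ x → σ x = x) → σ 0 = 0 →
    invF σ M = n → ∃ T, IsTowerDiagram T ∧ phi T = σ := by
  intro n
  induction n using Nat.strong_induction_on with
  | _ n ih =>
    intro σ M hfix h0 hinv
    rcases Nat.eq_zero_or_pos n with rfl | hpos
    · refine ⟨∅, fun c hc => absurd hc (Finset.notMem_empty c), ?_⟩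
      rw [phi_empty, eq_one_of_invF_zero hfix hinv]
    · obtain ⟨a, ha1, haM, hdesc⟩ := exists_descent (by omega : invF σ M ≠ 0) h0
      have hfix' : ∀ x, M ≤ x → (σ * Equiv.swap a (a+1)) x = x := by
        intro x hx
        rw [Equiv.Perm.mul_apply, Equiv.swap_apply_of_ne_of_ne (by omega) (by omega)]
        exact hfix x hx
      have h0' : (σ * Equiv.swap a (a+1)) 0 = 0 := by
        rw [Equiv.Perm.mul_apply, Equiv.swap_apply_of_ne_of_ne (by omega) (by omega)]
        exact h0
      have hinv' : invF (σ * Equiv.swap a (a+1)) M = n - 1 := by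
        rw [invF_mul_swap σ haM, if_neg (by omega), hinv]
      obtain ⟨T', ht', hphi'⟩ := ih (n-1) (by omega) _ M hfix' h0' hinv'
      have hasc : ∀ N, (∀ d ∈ T', d.1 < N) →
          permOf (eword (res T' 0) N) a < permOf (eword (res T' 0) N) (a+1) := by
        intro N hN
        rw [res_zero, phi_eq hN, hphi']
        simp only [Equiv.Perm.mul_apply, Equiv.swap_apply_left, Equiv.swap_apply_right]
        exact hdesc
      obtain ⟨T, hT⟩ := slide_exists (res T' 0).card rfl ht' ha1 (Nat.zero_le _) hasc
      obtain ⟨⟨c, hcm, -, rfl⟩, htow, hperm⟩ := slide_main ht' hT ha1 (Nat.zero_le _)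
      refine ⟨insert c T', htow, ?_⟩
      have hNall : ∀ d ∈ insert c T', d.1 < bnd (insert c T') := fun d hd => cell_lt_bnd hd
      obtain ⟨hmul, -⟩ := hperm _ hNall
      rw [res_zero, res_zero] at hmul
      have he : phi (insert c T') = phi T' * Equiv.swap a (a+1) := by
        rw [← phi_eq hNall, hmul, phi_eq (fun d hd => hNall d (Finset.mem_insert_of_mem hd))]
      rw [he, hphi', mul_assoc, Equiv.swap_mul_self, mul_one]

lemma foldr_max_le {l : List ℕ} {a : ℕ} (h : a ∈ l) : a ≤ l.foldr max 0 := by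
  induction l with
  | nil => simp at h
  | cons b l ih =>
    rw [List.foldr_cons]
    rcases List.mem_cons.1 h with rfl | h
    · exact le_max_left _ _
    · exact le_trans (ih h) (le_max_right _ _)

lemma eword_pack {T : Finset Cell} (ht : IsTowerDiagram T) :
    IsReducedWord (eword T (bnd T)) ∧ SRDiagram (eword T (bnd T)) T ∧
      (eword T (bnd T)).length = T.card ∧ permOf (eword T (bnd T)) = phi T := by
  have hN : ∀ c ∈ T, c.1 < bnd T := fun c hc => cell_lt_bnd hc
  have hsrd := eword_srd T.card T rfl ht (bnd T) hN
  have hpos : IsPosWord (eword T (bnd T)) := by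
    intro a ha
    obtain ⟨i, hi1, hi2, hi3⟩ := eword_letter ha
    obtain ⟨j, hj⟩ := col_nonempty (show colCard T i ≠ 0 by omega)
    have := (ht _ hj).1
    omega
  have hlen : (eword T (bnd T)).length = T.card := by
    rw [eword_length, Finset.filter_true_of_mem fun c hc => hN c hc]
  have hprops := srd_props hsrd hpos
  refine ⟨⟨hpos, ?_⟩, hsrd, hlen, rfl⟩
  intro w' hw' hperm
  have hMe : ∀ b ∈ eword T (bnd T),
      b + 1 < max ((eword T (bnd T)).foldr max 0 + 2) (w'.foldr max 0 + 2) :=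
    fun b hb => by have := foldr_max_le hb; omega
  have hMw : ∀ b ∈ w',
      b + 1 < max ((eword T (bnd T)).foldr max 0 + 2) (w'.foldr max 0 + 2) :=
    fun b hb => by have := foldr_max_le hb; omega
  have h1 := hprops.2.2.2 _ hMe
  have h2 := invF_permOf_le hMw
  rw [hperm] at h2
  omega

end TD


/-- The map `ω ↦ T_ω` is a bijection between the set of all
finite permutations and the set of all tower diagrams. -/
theorem perm_towerDiagram_bijection :
    (∀ ω : Equiv.Perm ℕ, FinitePerm ω → ∃ T, IsTowerDiagram T ∧ TowerDiagramOf ω T) ∧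
      (∀ (ω : Equiv.Perm ℕ) (T T' : Finset Cell),
        TowerDiagramOf ω T → TowerDiagramOf ω T' → T = T') ∧
      (∀ (ω ω' : Equiv.Perm ℕ) (T : Finset Cell), FinitePerm ω → FinitePerm ω' →
        TowerDiagramOf ω T → TowerDiagramOf ω' T → ω = ω') ∧
      (∀ T : Finset Cell, IsTowerDiagram T →
        ∃ ω : Equiv.Perm ℕ, FinitePerm ω ∧ TowerDiagramOf ω T) := by
  refine ⟨?_, ?_, ?_, ?_⟩
  · intro ω hω
    obtain ⟨w0, hw0pos, hw0⟩ := hω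
    have hfix : ∀ x, w0.foldr max 0 + 2 ≤ x → ω x = x := by
      intro x hx
      rw [← hw0]
      exact TD.permOf_fix_big (fun a ha => by have := TD.foldr_max_le ha; omega) hx
    have h0 : ω 0 = 0 := by
      rw [← hw0]
      exact TD.permOf_fix_lt (fun a ha => hw0pos a ha) (by omega)
    obtain ⟨T, ht, hphi⟩ := TD.phi_surj _ ω (w0.foldr max 0 + 2) hfix h0 rfl
    obtain ⟨hred, hsrd, hlen, hperm⟩ := TD.eword_pack ht
    exact ⟨T, ht, ⟨TD.eword T (TD.bnd T), hred, by rw [hperm, hphi], hsrd⟩⟩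
  · rintro ω T T' ⟨w, hwred, hwperm, hwsrd⟩ ⟨w', hw'red, hw'perm, hw'srd⟩
    have p1 := TD.srd_props hwsrd hwred.1
    have p2 := TD.srd_props hw'srd hw'red.1
    apply TD.phi_inj T.card T T' rfl p1.1 p2.1
    rw [p1.2.2.1, p2.2.2.1, hwperm, hw'perm]
  · rintro ω ω' T - - ⟨w, hwred, hwperm, hwsrd⟩ ⟨w', hw'red, hw'perm, hw'srd⟩
    have p1 := TD.srd_props hwsrd hwred.1
    have p2 := TD.srd_props hw'srd hw'red.1
    rw [← hwperm, ← hw'perm, ← p1.2.2.1, ← p2.2.2.1]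
  · intro T ht
    obtain ⟨hred, hsrd, hlen, hperm⟩ := TD.eword_pack ht
    exact ⟨TD.phi T, ⟨TD.eword T (TD.bnd T), hred.1, hperm⟩,
      ⟨TD.eword T (TD.bnd T), hred, hperm, hsrd⟩⟩
end

section
/- Let ω be a finite permutation. Then there exists a unique reduced expression η = η₁η₂...η_l representing ω such that η is a concatenation of blocks λ₁, λ₂, ..., λ_s where (1) each block λ_i is a strictly increasing sequence of consecutive integers, and (2) the sequence of initial terms of the blocks λ₁, ..., λ_s is strictly decreasing. -/


lemma permOf_nil : permOf [] = 1 := rfl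

lemma permOf_append (u v : List ℕ) : permOf (u ++ v) = permOf u * permOf v := by
  simp [permOf]

lemma permOf_snoc (w : List ℕ) (a : ℕ) :
    permOf (w ++ [a]) = permOf w * Equiv.swap a (a + 1) := by
  simp [permOf]

lemma swap_succ_apply (a x : ℕ) :
    Equiv.swap a (a + 1) x = if x = a then a + 1 else if x = a + 1 then a else x := by
  rw [Equiv.swap_apply_def]

noncomputable def blockPerm (r k : ℕ) : Equiv.Perm ℕ := permOf (List.range' r k)

lemma blockPerm_apply (r k x : ℕ) :
    blockPerm r k x =
      if x < r then x else if x < r + k then x + 1 else if x = r + k then r else x := by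
  induction k generalizing x with
  | zero => simp [blockPerm, permOf]; split_ifs <;> omega
  | succ k ih =>
      rw [blockPerm, List.range'_concat, permOf_snoc, Equiv.Perm.mul_apply]
      rw [show permOf (List.range' r k) = blockPerm r k from rfl]
      rw [swap_succ_apply]
      rw [ih]
      split_ifs <;> omega

def InvSet (σ : Equiv.Perm ℕ) : Set (ℕ × ℕ) := {p | p.1 < p.2 ∧ σ p.2 < σ p.1}

noncomputable def invN (σ : Equiv.Perm ℕ) : ℕ := (InvSet σ).ncard

lemma invSet_one : InvSet 1 = ∅ := by
  ext ⟨x, y⟩; simp [InvSet]; omega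

lemma fix_lt_ge {σ : Equiv.Perm ℕ} {r x : ℕ} (h : ∀ y < r, σ y = y) (hx : r ≤ x) :
    r ≤ σ x := by
  by_contra hc
  push_neg at hc
  have := h (σ x) hc
  have := σ.injective this
  omega

lemma invSet_finite_of_bound {σ : Equiv.Perm ℕ} {N : ℕ} (h : ∀ x, N ≤ x → σ x = x) :
    (InvSet σ).Finite := by
  apply Set.Finite.subset ((Set.finite_Iio N).prod (Set.finite_Iio N))
  rintro ⟨x, y⟩ ⟨hxy, hinv⟩
  dsimp only at hxy hinv
  simp only [Set.mem_prod, Set.mem_Iio]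
  by_cases hy : y < N
  · constructor
    · omega
    · exact hy
  · exfalso
    push_neg at hy
    have h1 : σ y = y := h y hy
    have h2 : σ x = x := by
      apply h
      have : N ≤ σ x := by omega
      have := σ.injective (h _ this)
      omega
    rw [h1] at hinv
    omega

lemma exists_bound (w : List ℕ) : ∃ N, ∀ x, N ≤ x → permOf w x = x := by
  induction w with
  | nil => exact ⟨0, fun x _ => rfl⟩
  | cons a t ih =>
      obtain ⟨N, hN⟩ := ih
      refine ⟨max N (a + 2), fun x hx => ?_⟩
      have h1 : permOf (a :: t) = Equiv.swap a (a + 1) * permOf t := by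
        simp [permOf]
      rw [h1, Equiv.Perm.mul_apply, hN x (le_trans (le_max_left _ _) hx),
        swap_succ_apply]
      have := le_trans (le_max_right _ _) hx
      split_ifs <;> omega

lemma invSet_finite_of_finitePerm {σ : Equiv.Perm ℕ} (h : ∃ w, permOf w = σ) :
    (InvSet σ).Finite := by
  obtain ⟨w, rfl⟩ := h
  obtain ⟨N, hN⟩ := exists_bound w
  exact invSet_finite_of_bound hN

lemma swap_lt_of_lt {a x y : ℕ} (hxy : x < y) (hne : ¬(x = a ∧ y = a + 1)) :
    Equiv.swap a (a + 1) x < Equiv.swap a (a + 1) y := by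
  rw [swap_succ_apply, swap_succ_apply]
  split_ifs <;> omega

lemma invSet_mul_swap_subset (σ : Equiv.Perm ℕ) (a : ℕ) :
    InvSet (σ * Equiv.swap a (a + 1)) ⊆
      (Prod.map (Equiv.swap a (a + 1)) (Equiv.swap a (a + 1))) '' InvSet σ ∪ {(a, a + 1)} := by
  rintro ⟨x, y⟩ ⟨hxy, hinv⟩
  by_cases hp : x = a ∧ y = a + 1
  · right; simp [hp.1, hp.2]
  · left
    refine ⟨(Equiv.swap a (a + 1) x, Equiv.swap a (a + 1) y), ⟨swap_lt_of_lt hxy hp, ?_⟩, ?_⟩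
    · simpa [Equiv.Perm.mul_apply] using hinv
    · simp [Prod.map, Equiv.swap_apply_self]

lemma prodmap_swap_inj (a : ℕ) :
    Function.Injective (Prod.map (Equiv.swap a (a + 1)) (Equiv.swap a (a + 1)) : ℕ × ℕ → ℕ × ℕ) :=
  Function.Injective.prodMap (Equiv.injective _) (Equiv.injective _)

lemma inv_mul_swap_le (σ : Equiv.Perm ℕ) (a : ℕ) (hfin : (InvSet σ).Finite) :
    invN (σ * Equiv.swap a (a + 1)) ≤ invN σ + 1 := by
  have h1 : ((Prod.map (Equiv.swap a (a + 1)) (Equiv.swap a (a + 1))) '' InvSet σ ∪ {(a, a + 1)}).Finite :=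
    (hfin.image _).union (Set.finite_singleton _)
  calc invN (σ * Equiv.swap a (a + 1)) ≤
      ((Prod.map (Equiv.swap a (a + 1)) (Equiv.swap a (a + 1))) '' InvSet σ ∪ {(a, a + 1)}).ncard :=
        Set.ncard_le_ncard (invSet_mul_swap_subset σ a) h1
    _ ≤ ((Prod.map (Equiv.swap a (a + 1)) (Equiv.swap a (a + 1))) '' InvSet σ).ncard + ({((a : ℕ), a + 1)} : Set (ℕ × ℕ)).ncard :=
        Set.ncard_union_le _ _
    _ ≤ invN σ + 1 := by
        rw [Set.ncard_image_of_injective _ (prodmap_swap_inj a), Set.ncard_singleton]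
        exact le_refl _

lemma inv_mul_swap_eq (σ : Equiv.Perm ℕ) (a : ℕ) (hfin : (InvSet σ).Finite)
    (h : σ a < σ (a + 1)) :
    invN (σ * Equiv.swap a (a + 1)) = invN σ + 1 := by
  have heq : InvSet (σ * Equiv.swap a (a + 1)) =
      (Prod.map (Equiv.swap a (a + 1)) (Equiv.swap a (a + 1))) '' InvSet σ ∪ {(a, a + 1)} := by
    apply Set.Subset.antisymm (invSet_mul_swap_subset σ a)
    rintro ⟨x, y⟩ (⟨⟨u, v⟩, ⟨huv, hinv⟩, heq⟩ | hs)
    · simp only [Prod.map, Prod.mk.injEq] at heq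
      obtain ⟨hx, hy⟩ := heq
      subst hx; subst hy
      have hne : ¬(u = a ∧ v = a + 1) := by
        rintro ⟨rfl, rfl⟩; simp only at hinv; omega
      refine ⟨swap_lt_of_lt huv hne, ?_⟩
      simpa [Equiv.Perm.mul_apply, Equiv.swap_apply_self] using hinv
    · simp only [Set.mem_singleton_iff, Prod.mk.injEq] at hs
      obtain ⟨rfl, rfl⟩ := hs
      refine ⟨by omega, ?_⟩
      simp only [Equiv.Perm.mul_apply, Equiv.swap_apply_left, Equiv.swap_apply_right]
      exact h
  have hnm : ((a : ℕ), a + 1) ∉ (Prod.map (Equiv.swap a (a + 1)) (Equiv.swap a (a + 1))) '' InvSet σ := by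
    rintro ⟨⟨u, v⟩, ⟨huv, hinv⟩, he⟩
    simp only [Prod.map, Prod.mk.injEq] at he
    obtain ⟨hu, hv⟩ := he
    have hu' : u = a + 1 := by
      have := congrArg (Equiv.swap a (a + 1)) hu
      simpa [Equiv.swap_apply_self, Equiv.swap_apply_left] using this
    have hv' : v = a := by
      have := congrArg (Equiv.swap a (a + 1)) hv
      simpa [Equiv.swap_apply_self, Equiv.swap_apply_right] using this
    omega
  rw [invN, heq, Set.ncard_union_eq (Set.disjoint_singleton_right.mpr hnm)
    (hfin.image _) (Set.finite_singleton _),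
    Set.ncard_image_of_injective _ (prodmap_swap_inj a), Set.ncard_singleton]
  rfl



lemma inv_le_length (w : List ℕ) : invN (permOf w) ≤ w.length := by
  induction w using List.reverseRecOn with
  | nil => simp [invN, permOf_nil, invSet_one]
  | append_singleton t a ih =>
      rw [permOf_snoc]
      calc invN (permOf t * Equiv.swap a (a + 1)) ≤ invN (permOf t) + 1 :=
            inv_mul_swap_le _ _ (invSet_finite_of_finitePerm ⟨t, rfl⟩)
        _ ≤ t.length + 1 := by omega
        _ = (t ++ [a]).length := by simp

lemma permOf_pos_fix_zero {w : List ℕ} (hw : IsPosWord w) : permOf w 0 = 0 := by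
  induction w with
  | nil => rfl
  | cons a t ih =>
      have h1 : permOf (a :: t) = Equiv.swap a (a + 1) * permOf t := by simp [permOf]
      have ha : 1 ≤ a := hw a List.mem_cons_self
      rw [h1, Equiv.Perm.mul_apply, ih (fun x hx => hw x (List.mem_cons_of_mem _ hx)),
        swap_succ_apply]
      split_ifs with h1 h2
      · omega
      · exact h2.elim
      · rfl

lemma permOf_mul_reverse (w : List ℕ) : permOf w * permOf w.reverse = 1 := by
  induction w with
  | nil => simp [permOf]
  | cons a t ih =>
      have h1 : permOf (a :: t) = Equiv.swap a (a + 1) * permOf t := by simp [permOf]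
      have h2 : permOf (a :: t).reverse = permOf t.reverse * Equiv.swap a (a + 1) := by
        rw [List.reverse_cons, permOf_snoc]
      rw [h1, h2, mul_assoc, ← mul_assoc (permOf t), ih, one_mul, Equiv.swap_mul_self]

lemma permOf_reverse_eq_inv (w : List ℕ) : permOf w.reverse = (permOf w)⁻¹ :=
  eq_inv_of_mul_eq_one_right (permOf_mul_reverse w)

lemma finitePerm_word {σ : Equiv.Perm ℕ} (h : FinitePerm σ) : ∃ w, permOf w = σ := by
  obtain ⟨w, _, hw⟩ := h; exact ⟨w, hw⟩

lemma inv_mul_block (σ : Equiv.Perm ℕ) (hσ : ∃ w, permOf w = σ) (r k : ℕ)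
    (hfix : ∀ x, x < r + 1 → σ x = x) :
    invN (σ * blockPerm r k) = invN σ + k := by
  induction k with
  | zero =>
      have : blockPerm r 0 = 1 := rfl
      rw [this, mul_one]
      omega
  | succ k ih =>
      have hb : blockPerm r (k + 1) = blockPerm r k * Equiv.swap (r + k) (r + k + 1) := by
        have e : r + 1 * k = r + k := by ring
        rw [blockPerm, List.range'_concat, permOf_snoc, e]
        rfl
      obtain ⟨w, hw⟩ := hσ
      have hfin : (InvSet (σ * blockPerm r k)).Finite := by
        apply invSet_finite_of_finitePerm
        exact ⟨w ++ List.range' r k, by rw [permOf_append, hw]; rfl⟩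
      have hasc : (σ * blockPerm r k) (r + k) < (σ * blockPerm r k) (r + k + 1) := by
        have e1 : (σ * blockPerm r k) (r + k) = r := by
          rw [Equiv.Perm.mul_apply, blockPerm_apply]
          split_ifs with h1 h2 h3 <;> [omega; omega; exact hfix r (by omega); omega]
        have e2 : (σ * blockPerm r k) (r + k + 1) = σ (r + k + 1) := by
          rw [Equiv.Perm.mul_apply, blockPerm_apply]
          split_ifs <;> first | rfl | omega
        rw [e1, e2]
        have : r + 1 ≤ σ (r + k + 1) := fix_lt_ge (fun y hy => hfix y hy) (by omega)
        omega
      rw [hb, ← mul_assoc, inv_mul_swap_eq _ _ hfin hasc, ih]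
      omega


lemma headI_range' {s k : ℕ} (hk : 1 ≤ k) : (List.range' s k).headI = s := by
  cases k with
  | zero => omega
  | succ k => rfl

lemma permOf_flatten_fix {L : List (List ℕ)} {m : ℕ}
    (h : ∀ b ∈ L, ∃ s k', 1 ≤ k' ∧ b = List.range' s k' ∧ m ≤ s) :
    ∀ x, x < m → permOf L.flatten x = x := by
  induction L with
  | nil => intro x _; rfl
  | cons b t ih =>
      intro x hx
      obtain ⟨s, k', hk', hb, hs⟩ := h b List.mem_cons_self
      rw [List.flatten_cons, permOf_append, Equiv.Perm.mul_apply,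
        ih (fun b hb => h b (List.mem_cons_of_mem _ hb)) x hx, hb]
      rw [show permOf (List.range' s k') = blockPerm s k' from rfl, blockPerm_apply]
      split_ifs <;> omega

lemma nf_decomp {L₀ : List (List ℕ)} {r k : ℕ} (hk : 1 ≤ k)
    (hheads : ∀ b ∈ L₀, ∃ s k', 1 ≤ k' ∧ b = List.range' s k' ∧ r + 1 ≤ s) :
    (∀ x, x < r → permOf (L₀ ++ [List.range' r k]).flatten x = x) ∧
    r < permOf (L₀ ++ [List.range' r k]).flatten r ∧
    permOf (L₀ ++ [List.range' r k]).flatten (r + k) = r ∧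
    permOf (L₀ ++ [List.range' r k]).flatten = permOf L₀.flatten * blockPerm r k := by
  have hfix : ∀ x, x < r + 1 → permOf L₀.flatten x = x := permOf_flatten_fix hheads
  have hsplit : permOf (L₀ ++ [List.range' r k]).flatten = permOf L₀.flatten * blockPerm r k := by
    rw [List.flatten_append, permOf_append]
    congr 1
    simp [blockPerm]
  refine ⟨?_, ?_, ?_, hsplit⟩
  · intro x hx
    rw [hsplit, Equiv.Perm.mul_apply, blockPerm_apply]
    have := hfix x (by omega)
    split_ifs <;> omega
  · rw [hsplit, Equiv.Perm.mul_apply, blockPerm_apply]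
    split_ifs with h1 h2
    · omega
    · have := fix_lt_ge hfix (show r + 1 ≤ r + 1 by omega)
      omega
    · omega
    · omega
  · rw [hsplit, Equiv.Perm.mul_apply, blockPerm_apply]
    split_ifs with h1 h2 h3
    · omega
    · omega
    · exact hfix r (by omega)
    · omega

lemma nf_extract {L₀ : List (List ℕ)} {b : List ℕ}
    (hb : ∀ c ∈ L₀ ++ [b], ∃ s len : ℕ, 1 ≤ len ∧ c = List.range' s len)
    (hch : List.Chain' (· > ·) ((L₀ ++ [b]).map fun c => c.headI)) :
    ∃ r k, 1 ≤ k ∧ b = List.range' r k ∧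
      ∀ c ∈ L₀, ∃ s k', 1 ≤ k' ∧ c = List.range' s k' ∧ r + 1 ≤ s := by
  obtain ⟨r, k, hk, hbr⟩ := hb b (by simp)
  refine ⟨r, k, hk, hbr, fun c hc => ?_⟩
  obtain ⟨s, k', hk', hcr⟩ := hb c (by simp [hc])
  refine ⟨s, k', hk', hcr, ?_⟩
  rw [List.map_append] at hch
  have hpw := (List.isChain_iff_pairwise.mp hch)
  have := (List.pairwise_append.mp hpw).2.2 c.headI (by simp; exact ⟨c, hc, rfl⟩)
    b.headI (by simp)
  rw [hcr, hbr, headI_range' hk', headI_range' hk] at this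
  omega

lemma nf_unique : ∀ n (η η' : List ℕ), η.length ≤ n → IsNaturalForm η →
    IsNaturalForm η' → permOf η = permOf η' → η = η' := by
  intro n
  induction n with
  | zero =>
      intro η η' hlen hη hη' hperm
      -- η = []
      have hη0 : η = [] := List.length_eq_zero_iff.mp (by omega)
      subst hη0
      obtain ⟨L', hL', hb', hch'⟩ := hη'
      rcases L'.eq_nil_or_concat' with h | ⟨L₀', b', rfl⟩
      · subst h; simpa using hL'
      · exfalso
        obtain ⟨r', k', hk', hbr', hheads'⟩ := nf_extract hb' hch'
        subst hbr'
        have hd := (nf_decomp hk' hheads').2.1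
        rw [← hL', ← hperm] at hd
        simp [permOf] at hd
  | succ n ih =>
      intro η η' hlen hη hη' hperm
      obtain ⟨L, hL, hb, hch⟩ := hη
      obtain ⟨L', hL', hb', hch'⟩ := hη'
      rcases L.eq_nil_or_concat' with h | ⟨L₀, b, rfl⟩
      · -- η = []
        subst h
        simp only [List.flatten_nil] at hL
        subst hL
        rcases L'.eq_nil_or_concat' with h' | ⟨L₀', b', rfl⟩
        · subst h'; simpa using hL'
        · exfalso
          obtain ⟨r', k', hk', hbr', hheads'⟩ := nf_extract hb' hch'
          subst hbr'
          have hd := (nf_decomp hk' hheads').2.1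
          rw [← hL', ← hperm] at hd
          simp [permOf] at hd
      · rcases L'.eq_nil_or_concat' with h' | ⟨L₀', b', rfl⟩
        · exfalso
          subst h'
          simp only [List.flatten_nil] at hL'
          obtain ⟨r, k, hk, hbr, hheads⟩ := nf_extract hb hch
          subst hbr
          have hd := (nf_decomp hk hheads).2.1
          rw [← hL, hperm, hL'] at hd
          simp [permOf] at hd
        · obtain ⟨r, k, hk, hbr, hheads⟩ := nf_extract hb hch
          obtain ⟨r', k', hk', hbr', hheads'⟩ := nf_extract hb' hch'
          subst hbr'; subst hbr
          obtain ⟨f1, f2, f3, f4⟩ := nf_decomp hk hheads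
          obtain ⟨f1', f2', f3', f4'⟩ := nf_decomp hk' hheads'
          rw [← hL] at f1 f2 f3 f4
          rw [← hL', ← hperm] at f1' f2' f3' f4'
          -- r = r'
          have hrr : r = r' := by
            rcases lt_trichotomy r r' with h | h | h
            · have := f1' r h; omega
            · exact h
            · have := f1 r' h; omega
          subst hrr
          -- k = k'
          have hkk : k = k' := by
            have := (permOf η).injective (f3.trans f3'.symm)
            omega
          subst hkk
          -- fronts equal
          have hfront : permOf L₀.flatten = permOf L₀'.flatten :=
            mul_right_cancel (f4.symm.trans f4')
          have hnf₀ : IsNaturalForm L₀.flatten :=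
            ⟨L₀, rfl, fun c hc => hb c (by simp [hc]),
              by rw [List.map_append] at hch; exact List.IsChain.left_of_append hch⟩
          have hnf₀' : IsNaturalForm L₀'.flatten :=
            ⟨L₀', rfl, fun c hc => hb' c (by simp [hc]),
              by rw [List.map_append] at hch'; exact List.IsChain.left_of_append hch'⟩
          have hlen₀ : L₀.flatten.length ≤ n := by
            have : η.length = L₀.flatten.length + k := by
              rw [hL]; simp
            omega
          have heq := ih L₀.flatten L₀'.flatten hlen₀ hnf₀ hnf₀' hfront
          rw [hL, hL', List.flatten_append, List.flatten_append, heq]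

lemma key_step {ω : Equiv.Perm ℕ} (hfp : FinitePerm ω) (hne : ω ≠ 1) :
    ∃ (r k : ℕ) (ω' : Equiv.Perm ℕ), 1 ≤ r ∧ 1 ≤ k ∧
      FinitePerm ω' ∧
      (∀ x, x < r + 1 → ω' x = x) ∧
      ω' * blockPerm r k = ω ∧
      invN ω = invN ω' + k ∧
      (∀ x, x < r → ω x = x) ∧ ω r ≠ r := by
  obtain ⟨w, hwpos, hw⟩ := hfp
  have hex : ∃ x, ω x ≠ x := by
    by_contra h
    push_neg at h
    exact hne (Equiv.ext h)
  set r := Nat.find hex with hr_def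
  have hr : ω r ≠ r := Nat.find_spec hex
  have hmin : ∀ x, x < r → ω x = x := by
    intro x hx
    by_contra hc
    exact Nat.find_min hex hx hc
  have hr1 : 1 ≤ r := by
    rcases Nat.eq_zero_or_pos r with h0 | h1
    · exfalso; apply hr; rw [h0, ← hw]; exact permOf_pos_fix_zero hwpos
    · exact h1
  have hsymm : r < ω.symm r := by
    rcases lt_trichotomy (ω.symm r) r with h | h | h
    · exfalso
      have := hmin _ h
      rw [Equiv.apply_symm_apply] at this
      omega
    · exfalso
      have h2 := congrArg ω h
      rw [Equiv.apply_symm_apply] at h2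
      exact hr h2.symm
    · exact h
  set k := ω.symm r - r with hk_def
  have hk : 1 ≤ k := by omega
  have hrk : ω (r + k) = r := by
    have : r + k = ω.symm r := by omega
    rw [this, Equiv.apply_symm_apply]
  set ω' := ω * (blockPerm r k)⁻¹ with hω'_def
  have hmul : ω' * blockPerm r k = ω := by
    rw [hω'_def, inv_mul_cancel_right]
  have hfix : ∀ x, x < r + 1 → ω' x = x := by
    intro x hx
    rcases Nat.lt_or_ge x r with hxr | hxr
    · have hbx : blockPerm r k x = x := by rw [blockPerm_apply]; split_ifs <;> omega
      have : (blockPerm r k)⁻¹ x = x := by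
        rw [Equiv.Perm.inv_eq_iff_eq]; exact hbx.symm
      rw [hω'_def, Equiv.Perm.mul_apply, this]
      exact hmin x hxr
    · have hxr' : x = r := by omega
      subst hxr'
      have hb : blockPerm r k (r + k) = r := by
        rw [blockPerm_apply]; split_ifs <;> omega
      have : (blockPerm r k)⁻¹ r = r + k := by
        rw [Equiv.Perm.inv_eq_iff_eq]; exact hb.symm
      rw [hω'_def, Equiv.Perm.mul_apply, this, hrk]
  have hfp' : FinitePerm ω' := by
    refine ⟨w ++ (List.range' r k).reverse, ?_, ?_⟩
    · intro a ha
      rcases List.mem_append.mp ha with h | h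
      · exact hwpos a h
      · rw [List.mem_reverse, List.mem_range'_1] at h
        omega
    · rw [permOf_append, hw, permOf_reverse_eq_inv]
      rfl
  have hinv : invN ω = invN ω' + k := by
    rw [← hmul]
    exact inv_mul_block ω' (finitePerm_word hfp') r k hfix
  exact ⟨r, k, ω', hr1, hk, hfp', hfix, hmul, hinv, hmin, hr⟩

lemma invN_one : invN 1 = 0 := by rw [invN, invSet_one, Set.ncard_empty]

lemma nf_exists : ∀ n (ω : Equiv.Perm ℕ), FinitePerm ω → invN ω ≤ n →
    ∃ L : List (List ℕ),
      (∀ b ∈ L, ∃ s len : ℕ, 1 ≤ len ∧ b = List.range' s len) ∧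
      List.Chain' (· > ·) (L.map fun b => b.headI) ∧
      permOf L.flatten = ω ∧
      L.flatten.length = invN ω ∧
      (∀ m, (∀ x, x < m → ω x = x) → ∀ b ∈ L, m ≤ b.headI) := by
  intro n
  induction n with
  | zero =>
      intro ω hfp hle
      by_cases h1 : ω = 1
      · subst h1
        exact ⟨[], by simp, List.isChain_nil, rfl, by simp [invN_one], by simp⟩
      · exfalso
        obtain ⟨r, k, ω', _, hk, _, _, _, hinv, _, _⟩ := key_step hfp h1
        omega
  | succ n ih =>
      intro ω hfp hle
      by_cases h1 : ω = 1
      · subst h1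
        exact ⟨[], by simp, List.isChain_nil, rfl, by simp [invN_one], by simp⟩
      · obtain ⟨r, k, ω', hr1, hk, hfp', hfix, hmul, hinv, hmin, hr⟩ := key_step hfp h1
        obtain ⟨L', hb', hch', hperm', hlen', hinvar'⟩ := ih ω' hfp' (by omega)
        refine ⟨L' ++ [List.range' r k], ?_, ?_, ?_, ?_, ?_⟩
        · intro b hb
          rcases List.mem_append.mp hb with h | h
          · exact hb' b h
          · simp only [List.mem_singleton] at h
            exact ⟨r, k, hk, h⟩
        · rw [List.map_append]
          show List.IsChain _ _
          rw [List.isChain_append]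
          refine ⟨hch', by simp, ?_⟩
          intro x hx y hy
          simp only [List.map_cons, List.map_nil, List.head?_cons, Option.mem_def,
            Option.some.injEq] at hy
          have hxmem : x ∈ L'.map (fun b => b.headI) := List.mem_of_mem_getLast? hx
          obtain ⟨b, hbm, rfl⟩ := List.mem_map.mp hxmem
          have := hinvar' (r + 1) hfix b hbm
          rw [← hy, headI_range' hk]
          omega
        · rw [List.flatten_append, permOf_append, hperm']
          simp only [List.flatten_cons, List.flatten_nil, List.append_nil]
          exact hmul
        · rw [List.flatten_append]
          simp only [List.flatten_cons, List.flatten_nil, List.append_nil,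
            List.length_append, List.length_range']
          omega
        · intro m hm b hb
          have hmr : m ≤ r := by
            by_contra hc
            exact hr (hm r (by omega))
          rcases List.mem_append.mp hb with h | h
          · have := hinvar' (r + 1) hfix b h
            omega
          · simp only [List.mem_singleton] at h
            rw [h, headI_range' hk]
            omega



/-- Every finite permutation has a unique reduced expression
in natural form: a concatenation of blocks of consecutive increasing integers
whose initial terms strictly decrease. -/
theorem natural_word_exists_unique
    (ω : Equiv.Perm ℕ) (hω : FinitePerm ω) :
    ∃! η : List ℕ, IsReducedWord η ∧ permOf η = ω ∧ IsNaturalForm η := by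
  obtain ⟨L, hb, hch, hperm, hlen, hinvar⟩ := nf_exists (invN ω) ω hω le_rfl
  have hfix1 : ∀ x, x < 1 → ω x = x := by
    intro x hx
    obtain ⟨w, hwpos, hw⟩ := hω
    interval_cases x
    rw [← hw]; exact permOf_pos_fix_zero hwpos
  have hpos : IsPosWord L.flatten := by
    intro a ha
    obtain ⟨b, hbm, hab⟩ := List.mem_flatten.mp ha
    obtain ⟨s, len, hlen', hbr⟩ := hb b hbm
    have h1 : 1 ≤ b.headI := hinvar 1 hfix1 b hbm
    rw [hbr, headI_range' hlen'] at h1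
    rw [hbr, List.mem_range'_1] at hab
    omega
  have hnf : IsNaturalForm L.flatten := ⟨L, rfl, hb, hch⟩
  refine ⟨L.flatten, ⟨⟨hpos, ?_⟩, hperm, hnf⟩, ?_⟩
  · intro w' hw' hperm'
    rw [hlen, ← hperm, ← hperm']
    exact inv_le_length w'
  · rintro η' ⟨hred', hperm', hnf'⟩
    exact nf_unique η'.length η' L.flatten le_rfl hnf' hnf (by rw [hperm', hperm])
end

section
/- Let ω ∈ Sₙ be a permutation, let T_ω be its tower diagram and D_ω its Rothe diagram. Then for each column index i, the number of cells in the i-th tower of T_ω equals the number of cells of D_ω in column i. In particular the nonempty columns of T_ω and D_ω coincide. -/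
namespace TowerPf
open Set

noncomputable def cf (π : Equiv.Perm ℕ) (i : ℕ) : ℕ := {j | i < j ∧ π j < π i}.ncard

def Bs (π : Equiv.Perm ℕ) (a : ℕ) : Set ℕ := {j | j < π.symm a ∧ a < π j}

lemma ncard_Iio' (n : ℕ) : (Set.Iio n).ncard = n := by
  rw [← Nat.card_coe_set_eq, Nat.card_eq_card_toFinset, Set.toFinset_Iio]
  exact Nat.card_Iio n

lemma ncard_Ioo' (a b : ℕ) : (Set.Ioo a b).ncard = b - a - 1 := by
  rw [← Nat.card_coe_set_eq, Nat.card_eq_card_toFinset, Set.toFinset_Ioo]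
  exact Nat.card_Ioo a b

lemma preim_eq_image (π : Equiv.Perm ℕ) (S : Set ℕ) : {j | π j ∈ S} = π.symm '' S := by
  ext j
  constructor
  · intro h; exact ⟨π j, h, π.symm_apply_apply j⟩
  · rintro ⟨y, hy, rfl⟩; simpa using hy

lemma preim_fin (π : Equiv.Perm ℕ) {S : Set ℕ} (hS : S.Finite) : {j | π j ∈ S}.Finite := by
  rw [preim_eq_image]; exact hS.image _

lemma ncard_preim (π : Equiv.Perm ℕ) (S : Set ℕ) : {j | π j ∈ S}.ncard = S.ncard := by
  rw [preim_eq_image]; exact Set.ncard_image_of_injective S π.symm.injective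

lemma cf_set_fin (π : Equiv.Perm ℕ) (i : ℕ) : {j | i < j ∧ π j < π i}.Finite :=
  (preim_fin π (finite_Iio (π i))).subset fun j hj => hj.2

/-- F4 : `i + cᵢ = π i + ℓᵢ`. -/
lemma key_sum (π : Equiv.Perm ℕ) (i : ℕ) :
    i + cf π i = π i + {j | j < i ∧ π i < π j}.ncard := by
  classical
  set X := {j | j < i ∧ π j < π i} with hX
  set L := {j | j < i ∧ π i < π j} with hL
  set C := {j | i < j ∧ π j < π i} with hC
  have hXfin : X.Finite := (finite_Iio i).subset fun j hj => hj.1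
  have hLfin : L.Finite := (finite_Iio i).subset fun j hj => hj.1
  have hCfin : C.Finite := cf_set_fin π i
  have h1 : {j | π j ∈ Iio (π i)} = X ∪ C := by
    ext j
    simp only [hX, hC, mem_setOf_eq, mem_Iio, mem_union]
    constructor
    · intro h
      rcases lt_trichotomy j i with hj | rfl | hj
      · exact Or.inl ⟨hj, h⟩
      · exact absurd h (lt_irrefl _)
      · exact Or.inr ⟨hj, h⟩
    · rintro (⟨_, h⟩ | ⟨_, h⟩) <;> exact h
  have h2 : Iio i = X ∪ L := by
    ext j
    simp only [hX, hL, mem_Iio, mem_union, mem_setOf_eq]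
    constructor
    · intro h
      rcases lt_trichotomy (π j) (π i) with hj | he | hj
      · exact Or.inl ⟨h, hj⟩
      · exact absurd (π.injective he) (ne_of_lt h)
      · exact Or.inr ⟨h, hj⟩
    · rintro (⟨h, _⟩ | ⟨h, _⟩) <;> exact h
  have d1 : Disjoint X C := by
    rw [Set.disjoint_left]; rintro j ⟨hj1, _⟩ ⟨hj2, _⟩; omega
  have d2 : Disjoint X L := by
    rw [Set.disjoint_left]; rintro j ⟨_, hj1⟩ ⟨_, hj2⟩; omega
  have e1 : π i = X.ncard + C.ncard := by
    rw [← Set.ncard_union_eq d1 hXfin hCfin, ← h1, ncard_preim, ncard_Iio']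
  have e2 : i = X.ncard + L.ncard := by
    rw [← Set.ncard_union_eq d2 hXfin hLfin, ← h2, ncard_Iio']
  show i + C.ncard = π i + L.ncard
  omega

lemma Bs_fin (π : Equiv.Perm ℕ) (a : ℕ) : (Bs π a).Finite :=
  (finite_Iio (π.symm a)).subset fun j hj => hj.1

lemma Bs_split (π : Equiv.Perm ℕ) (a : ℕ) {lo x : ℕ} (h : lo ≤ x) :
    (Bs π a ∩ Set.Iio x).ncard =
      (Bs π a ∩ Set.Iio lo).ncard + (Bs π a ∩ Set.Ico lo x).ncard := by
  rw [← Set.ncard_union_eq ?_ ?_ ?_]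
  · congr 1
    ext k
    simp only [mem_inter_iff, mem_Iio, mem_Ico, mem_union]
    constructor
    · rintro ⟨hb, hk⟩
      by_cases hkl : k < lo
      · exact Or.inl ⟨hb, hkl⟩
      · exact Or.inr ⟨hb, by omega, hk⟩
    · rintro (⟨hb, hk⟩ | ⟨hb, hk1, hk2⟩)
      · exact ⟨hb, by omega⟩
      · exact ⟨hb, hk2⟩
  · rw [Set.disjoint_left]; rintro k ⟨_, hk1⟩ ⟨_, hk2, _⟩
    simp only [mem_Iio] at hk1; omega
  · exact (Bs_fin π a).inter_of_left _
  · exact (Bs_fin π a).inter_of_left _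

lemma Bs_mono (π : Equiv.Perm ℕ) (a : ℕ) {lo x : ℕ} (h : lo ≤ x) :
    (Bs π a ∩ Set.Iio lo).ncard ≤ (Bs π a ∩ Set.Iio x).ncard := by
  rw [Bs_split π a h]; omega

lemma Bs_succ (π : Equiv.Perm ℕ) (a : ℕ) {x : ℕ} (hx : x ∈ Bs π a) :
    (Bs π a ∩ Set.Iio (x + 1)).ncard = (Bs π a ∩ Set.Iio x).ncard + 1 := by
  have h : Bs π a ∩ Set.Iio (x + 1) = insert x (Bs π a ∩ Set.Iio x) := by
    ext k
    simp only [mem_inter_iff, mem_Iio, mem_insert_iff]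
    constructor
    · rintro ⟨hb, hk⟩
      rcases Nat.lt_succ_iff_lt_or_eq.mp hk with hk | rfl
      · exact Or.inr ⟨hb, hk⟩
      · exact Or.inl rfl
    · rintro (rfl | ⟨hb, hk⟩)
      · exact ⟨hx, Nat.lt_succ_self _⟩
      · exact ⟨hb, by omega⟩
  rw [h, Set.ncard_insert_of_notMem (by simp) (((Bs_fin π a).inter_of_left _))]

/-- F3. -/
lemma sum_at_P (π : Equiv.Perm ℕ) (a : ℕ) :
    π.symm a + cf π (π.symm a) = a + (Bs π a).ncard := by
  have h := key_sum π (π.symm a)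
  have hs : {j | j < π.symm a ∧ π (π.symm a) < π j} = Bs π a := by
    ext j; simp [Bs, Equiv.apply_symm_apply]
  rw [hs, Equiv.apply_symm_apply] at h
  exact h

/-- F2. -/
lemma sum_at_B (π : Equiv.Perm ℕ) (a j : ℕ) (hjP : j < π.symm a) (hja : a < π j) :
    j + cf π j = a + 1 + (Bs π a ∩ Set.Iio j).ncard
      + {u | a < u ∧ u < π j ∧ j < π.symm u}.ncard := by
  classical
  set L := {j' | j' < j ∧ π j < π j'} with hL
  set D := {j' | j' < j ∧ a < π j' ∧ π j' < π j} with hD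
  set E := {u | a < u ∧ u < π j ∧ j < π.symm u} with hE
  have hLfin : L.Finite := (finite_Iio j).subset fun k hk => hk.1
  have hDfin : D.Finite := (finite_Iio j).subset fun k hk => hk.1
  have hEfin : E.Finite := (finite_Iio (π j)).subset fun k hk => hk.2.1
  -- Bs ∩ Iio j = L ∪ D
  have h1 : Bs π a ∩ Set.Iio j = L ∪ D := by
    ext k
    simp only [hL, hD, Bs, mem_inter_iff, mem_setOf_eq, mem_Iio, mem_union]
    constructor
    · rintro ⟨⟨hkP, hka⟩, hkj⟩
      rcases lt_trichotomy (π k) (π j) with hk | he | hk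
      · exact Or.inr ⟨hkj, hka, hk⟩
      · exact absurd (π.injective he) (by omega)
      · exact Or.inl ⟨hkj, hk⟩
    · rintro (⟨hkj, hk⟩ | ⟨hkj, hka, hk⟩)
      · exact ⟨⟨by omega, by omega⟩, hkj⟩
      · exact ⟨⟨by omega, hka⟩, hkj⟩
  have d1 : Disjoint L D := by
    rw [Set.disjoint_left]; rintro k ⟨_, hk1⟩ ⟨_, _, hk2⟩; omega
  have e1 : (Bs π a ∩ Set.Iio j).ncard = L.ncard + D.ncard := by
    rw [h1, Set.ncard_union_eq d1 hLfin hDfin]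
  -- Ioo a (π j) splits into π '' D and E
  have hD2 : {u | a < u ∧ u < π j ∧ π.symm u < j} = π '' D := by
    ext u
    constructor
    · rintro ⟨hu1, hu2, hu3⟩
      exact ⟨π.symm u, ⟨hu3, by rwa [Equiv.apply_symm_apply], by rwa [Equiv.apply_symm_apply]⟩,
        Equiv.apply_symm_apply π u⟩
    · rintro ⟨k, ⟨hk1, hk2, hk3⟩, rfl⟩
      exact ⟨hk2, hk3, by rwa [Equiv.symm_apply_apply]⟩
  have h2 : Set.Ioo a (π j) = {u | a < u ∧ u < π j ∧ π.symm u < j} ∪ E := by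
    ext u
    simp only [hE, mem_Ioo, mem_union, mem_setOf_eq]
    constructor
    · rintro ⟨hu1, hu2⟩
      rcases lt_trichotomy (π.symm u) j with hu | he | hu
      · exact Or.inl ⟨hu1, hu2, hu⟩
      · exfalso; have : u = π j := by rw [← he, Equiv.apply_symm_apply]
        omega
      · exact Or.inr ⟨hu1, hu2, hu⟩
    · rintro (⟨h1, h2, _⟩ | ⟨h1, h2, _⟩) <;> exact ⟨h1, h2⟩
  have d2 : Disjoint {u | a < u ∧ u < π j ∧ π.symm u < j} E := by
    rw [Set.disjoint_left]; rintro u ⟨_, _, hu1⟩ ⟨_, _, hu2⟩; omega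
  have e2 : (Set.Ioo a (π j)).ncard = D.ncard + E.ncard := by
    rw [h2, Set.ncard_union_eq d2 ((finite_Ioo a (π j)).subset (by rw [h2]; exact subset_union_left)) hEfin,
      hD2, Set.ncard_image_of_injective D π.injective]
  rw [ncard_Ioo'] at e2
  have e3 := key_sum π j
  rw [show {j' | j' < j ∧ π j < π j'} = L from rfl] at e3
  omega

/-- F1. -/
lemma sum_at_small (π : Equiv.Perm ℕ) (a i : ℕ) (hiP : i < π.symm a) (hia : π i < a) :
    i + cf π i + 1 ≤ a + (Bs π a ∩ Set.Iio i).ncard := by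
  classical
  set L := {j | j < i ∧ π i < π j} with hL
  set X := {j | j < i ∧ π i < π j ∧ π j < a} with hX
  set Y := Bs π a ∩ Set.Iio i with hY
  have hXfin : X.Finite := (finite_Iio i).subset fun k hk => hk.1
  have hYfin : Y.Finite := (Bs_fin π a).inter_of_left _
  have hsub : L ⊆ X ∪ Y := by
    rintro k ⟨hk1, hk2⟩
    rcases lt_trichotomy (π k) a with hk | he | hk
    · exact Or.inl ⟨hk1, hk2, hk⟩
    · exfalso
      have : k = π.symm a := by rw [← he, Equiv.symm_apply_apply]
      omega
    · exact Or.inr ⟨⟨by omega, hk⟩, hk1⟩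
  have hLle : L.ncard ≤ X.ncard + Y.ncard :=
    le_trans (Set.ncard_le_ncard hsub ((hXfin.union hYfin))) (Set.ncard_union_le X Y)
  have hXle : X.ncard ≤ a - π i - 1 := by
    have : X ⊆ {j | π j ∈ Set.Ioo (π i) a} := by
      rintro k ⟨_, hk2, hk3⟩; exact ⟨hk2, hk3⟩
    calc X.ncard ≤ {j | π j ∈ Set.Ioo (π i) a}.ncard :=
          Set.ncard_le_ncard this (preim_fin π (finite_Ioo _ _))
      _ = a - π i - 1 := by rw [ncard_preim, ncard_Ioo']
  have e3 := key_sum π i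
  rw [show {j | j < i ∧ π i < π j} = L from rfl] at e3
  omega

lemma no_B_in (π : Equiv.Perm ℕ) (a : ℕ) (T : Finset Cell) (hπ0 : π 0 = 0)
    (hT : ∀ x : Cell, x ∈ T ↔ 1 ≤ x.1 ∧ x.2 < cf π x.1)
    {lo α m : ℕ} (hm : m ≤ α)
    (hα : α = a + (Bs π a ∩ Set.Iio lo).ncard)
    (hblock : ∀ c : Cell, c ∈ T → lo ≤ c.1 → c.1 + c.2 + 1 = α → c.1 < m → False) :
    Bs π a ∩ Set.Ico lo m = ∅ := by
  by_contra hne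
  have hne' : (Bs π a ∩ Set.Ico lo m).Nonempty := Set.nonempty_iff_ne_empty.mpr hne
  obtain ⟨hjB, hjlo, hjm⟩ := Nat.sInf_mem hne'
  set j := sInf (Bs π a ∩ Set.Ico lo m) with hj
  have hwin : Bs π a ∩ Set.Ico lo j = ∅ := by
    ext k
    simp only [Set.mem_inter_iff, Set.mem_Ico, Set.mem_empty_iff_false, iff_false, not_and]
    rintro hkB hklo hkj
    have : j ≤ k := Nat.sInf_le ⟨hkB, hklo, by omega⟩
    omega
  have hcount : (Bs π a ∩ Set.Iio j).ncard = (Bs π a ∩ Set.Iio lo).ncard := by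
    rw [Bs_split π a hjlo, hwin]; simp
  have hsum := sum_at_B π a j hjB.1 hjB.2
  have hj1 : 1 ≤ j := by
    rcases Nat.eq_zero_or_pos j with hz | h
    · exfalso; have h2 := hjB.2; rw [hz, hπ0] at h2; have := hjB.2; omega
    · exact h
  have hcell : ((j, α - 1 - j) : Cell) ∈ T := by
    rw [hT]
    refine ⟨hj1, ?_⟩
    show α - 1 - j < cf π j
    omega
  exact hblock _ hcell hjlo (by omega) (by omega)

lemma P_pos (π : Equiv.Perm ℕ) (a : ℕ) (hπ0 : π 0 = 0) (ha : 1 ≤ a) : 1 ≤ π.symm a := by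
  rcases Nat.eq_zero_or_pos (π.symm a) with hz | h
  · exfalso
    have : π (π.symm a) = a := π.apply_symm_apply a
    rw [hz, hπ0] at this; omega
  · exact h

/-- If `P` lies in the window `[lo, m)` (with `m ≤ α`, no `B`-elements in `[lo, m)`),
then the cell `(P, α-1-P)` is in `T` and has diagonal sum `α`. -/
lemma P_cell (π : Equiv.Perm ℕ) (a : ℕ) (T : Finset Cell) (hπ0 : π 0 = 0) (ha : 1 ≤ a)
    (hT : ∀ x : Cell, x ∈ T ↔ 1 ≤ x.1 ∧ x.2 < cf π x.1)
    {lo α : ℕ}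
    (hα : α = a + (Bs π a ∩ Set.Iio lo).ncard)
    (hloP : lo ≤ π.symm a) (hPα : π.symm a < α)
    (hwin : Bs π a ∩ Set.Ico lo (π.symm a) = ∅) :
    ((π.symm a, α - 1 - π.symm a) : Cell) ∈ T ∧
      π.symm a + (α - 1 - π.symm a) + 1 = α := by
  have hcount : (Bs π a ∩ Set.Iio (π.symm a)).ncard = (Bs π a ∩ Set.Iio lo).ncard := by
    rw [Bs_split π a hloP, hwin]; simp
  have hBP : Bs π a ∩ Set.Iio (π.symm a) = Bs π a := by
    ext k; simp only [Set.mem_inter_iff, Set.mem_Iio, and_iff_left_iff_imp]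
    exact fun hk => hk.1
  have hsum := sum_at_P π a
  rw [← hBP] at hsum
  have hP1 := P_pos π a hπ0 ha
  constructor
  · rw [hT]
    refine ⟨hP1, ?_⟩
    show α - 1 - π.symm a < cf π (π.symm a)
    omega
  · omega

lemma BP_eq (π : Equiv.Perm ℕ) (a : ℕ) : Bs π a ∩ Set.Iio (π.symm a) = Bs π a := by
  ext k
  simp only [Set.mem_inter_iff, Set.mem_Iio, and_iff_left_iff_imp]
  exact fun hk => hk.1

lemma slide_main (π : Equiv.Perm ℕ) (a : ℕ) (T : Finset Cell) (hπ0 : π 0 = 0) (ha : 1 ≤ a)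
    (hT : ∀ x : Cell, x ∈ T ↔ 1 ≤ x.1 ∧ x.2 < cf π x.1) :
    ∀ (lo α : ℕ) (T' : Finset Cell), SlideAux T lo α T' →
      lo ≤ π.symm a → lo ≤ α → α = a + (Bs π a ∩ Set.Iio lo).ncard →
      (π.symm (a + 1) < π.symm a → lo ≤ π.symm (a + 1)) →
      π.symm a < π.symm (a + 1) ∧ T' = insert (π.symm a, cf π (π.symm a)) T := by
  intro lo α T' h
  induction h with
  | s1a lo α h1 h2 =>
    intro hloP hloα hα hQ
    have hwin : Bs π a ∩ Set.Ico lo α = ∅ :=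
      no_B_in π a T hπ0 hT le_rfl hα (fun c hc hclo hcsum _ => h1 c hc hclo hcsum)
    have hcount : (Bs π a ∩ Set.Iio α).ncard = (Bs π a ∩ Set.Iio lo).ncard := by
      rw [Bs_split π a hloα, hwin]; simp
    have hPα : α ≤ π.symm a := by
      by_contra hcon
      push_neg at hcon
      have hwin' : Bs π a ∩ Set.Ico lo (π.symm a) = ∅ := by
        apply Set.eq_empty_of_subset_empty
        intro k hk
        have hk2 := hk.2
        simp only [Set.mem_Ico] at hk2
        have : k ∈ Bs π a ∩ Set.Ico lo α := ⟨hk.1, hk2.1, by omega⟩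
        rwa [hwin] at this
      obtain ⟨hc, he⟩ := P_cell π a T hπ0 ha hT hα hloP hcon hwin'
      exact h1 _ hc hloP he
    have hPeq : π.symm a = α := by
      by_contra hne
      have hαP : α < π.symm a := by omega
      have hπα_ne : π α ≠ a := fun he => hne (by rw [← he, Equiv.symm_apply_apply])
      rcases lt_trichotomy (π α) a with hlt | he | hgt
      · have := sum_at_small π a α hαP hlt
        omega
      · exact hπα_ne he
      · have hsum := sum_at_B π a α hαP hgt
        have hα1 : 1 ≤ α := by omega
        have hcell : ((α, 0) : Cell) ∈ T := by
          rw [hT]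
          refine ⟨hα1, ?_⟩
          show 0 < cf π α
          omega
        exact h2 _ hcell hloα (by omega)
    have hcount2 : (Bs π a ∩ Set.Iio (π.symm a)).ncard = (Bs π a ∩ Set.Iio lo).ncard := by
      rw [hPeq]; exact hcount
    have hsum := sum_at_P π a
    rw [← BP_eq π a] at hsum
    have hcf0 : cf π (π.symm a) = 0 := by omega
    constructor
    · rcases lt_trichotomy (π.symm a) (π.symm (a + 1)) with h | he | h
      · exact h
      · exact absurd (π.symm.injective he) (by omega)
      · exfalso
        have hQlo := hQ h
        have : π.symm (a + 1) ∈ Bs π a ∩ Set.Ico lo α :=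
          ⟨⟨h, by rw [Equiv.apply_symm_apply]; omega⟩, hQlo, by omega⟩
        rw [hwin] at this
        exact this
    · rw [hcf0, hPeq]
  | s1c lo α T' h1 h2 h2' h3 hrec ih =>
    intro hloP hloα hα hQ
    have hwin : Bs π a ∩ Set.Ico lo α = ∅ :=
      no_B_in π a T hπ0 hT le_rfl hα (fun c hc hclo hcsum _ => h1 c hc hclo hcsum)
    have hcount : (Bs π a ∩ Set.Iio α).ncard = (Bs π a ∩ Set.Iio lo).ncard := by
      rw [Bs_split π a hloα, hwin]; simp
    have hPα : α ≤ π.symm a := by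
      by_contra hcon
      push_neg at hcon
      have hwin' : Bs π a ∩ Set.Ico lo (π.symm a) = ∅ := by
        apply Set.eq_empty_of_subset_empty
        intro k hk
        have hk2 := hk.2
        simp only [Set.mem_Ico] at hk2
        have : k ∈ Bs π a ∩ Set.Ico lo α := ⟨hk.1, hk2.1, by omega⟩
        rwa [hwin] at this
      obtain ⟨hc, he⟩ := P_cell π a T hπ0 ha hT hα hloP hcon hwin'
      exact h1 _ hc hloP he
    have hcfα : 0 < cf π α := ((hT _).mp h2).2
    have hcf2 : 1 < cf π α := ((hT _).mp h3).2
    have hPne : π.symm a ≠ α := by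
      intro he
      have hsum := sum_at_P π a
      rw [← BP_eq π a] at hsum
      rw [he] at hsum
      omega
    have hαP : α < π.symm a := by omega
    have hπα_ne : π α ≠ a := fun he => hPne (by rw [← he, Equiv.symm_apply_apply])
    have hgt : a < π α := by
      rcases lt_trichotomy (π α) a with hlt | he | hgt
      · exfalso
        have := sum_at_small π a α hαP hlt
        omega
      · exact absurd he hπα_ne
      · exact hgt
    have hαB : α ∈ Bs π a := ⟨hαP, hgt⟩
    have hsum := sum_at_B π a α hαP hgt
    have hE : {u | a < u ∧ u < π α ∧ α < π.symm u}.Nonempty := by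
      apply Set.nonempty_of_ncard_ne_zero
      omega
    have hπα_ne1 : π α ≠ a + 1 := by
      intro he
      obtain ⟨u, hu1, hu2, _⟩ := hE
      rw [he] at hu2
      omega
    have hQα : π.symm (a + 1) ≠ α := fun he => hπα_ne1 (by rw [← he, Equiv.apply_symm_apply])
    apply ih
    · omega
    · omega
    · rw [Bs_succ π a hαB, hcount]; omega
    · intro hdes
      have hQlo := hQ hdes
      by_contra hcon
      push_neg at hcon
      have : π.symm (a + 1) ∈ Bs π a ∩ Set.Ico lo α :=
        ⟨⟨hdes, by rw [Equiv.apply_symm_apply]; omega⟩, hQlo, by omega⟩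
      rw [hwin] at this
      exact this
  | s2a lo α i j hmem hlo hdiag hmin htop =>
    intro hloP hloα hα hQ
    have hmemT := (hT _).mp hmem
    have hi1 : 1 ≤ i := hmemT.1
    have hcf_lb : j < cf π i := hmemT.2
    have hcf_ub : cf π i ≤ j + 1 := by
      by_contra hcon
      push_neg at hcon
      exact htop ((hT _).mpr ⟨hi1, hcon⟩)
    have hwin : Bs π a ∩ Set.Ico lo i = ∅ :=
      no_B_in π a T hπ0 hT (by omega) hα
        (fun c hc hclo hcsum hclt => by have := hmin c hc hclo hcsum; omega)
    have hcount : (Bs π a ∩ Set.Iio i).ncard = (Bs π a ∩ Set.Iio lo).ncard := by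
      rw [Bs_split π a hlo, hwin]; simp
    have hPeq : i = π.symm a := by
      rcases lt_trichotomy i (π.symm a) with hlt | he | hgt
      · exfalso
        rcases lt_trichotomy (π i) a with h' | h' | h'
        · have := sum_at_small π a i hlt h'
          omega
        · have : i = π.symm a := by rw [← h', Equiv.symm_apply_apply]
          omega
        · have hsum := sum_at_B π a i hlt h'
          omega
      · exact he
      · exfalso
        have hwin' : Bs π a ∩ Set.Ico lo (π.symm a) = ∅ := by
          apply Set.eq_empty_of_subset_empty
          intro k hk
          have hk2 := hk.2
          simp only [Set.mem_Ico] at hk2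
          have : k ∈ Bs π a ∩ Set.Ico lo i := ⟨hk.1, hk2.1, by omega⟩
          rwa [hwin] at this
        obtain ⟨hc, he⟩ := P_cell π a T hπ0 ha hT hα hloP (by omega) hwin'
        have := hmin _ hc hloP he
        simp only at this
        omega
    have hcf : cf π i = j + 1 := by omega
    constructor
    · by_contra hcon
      push_neg at hcon
      have hne : π.symm (a + 1) ≠ π.symm a := fun he => by
        have := π.symm.injective he
        omega
      have hdes : π.symm (a + 1) < π.symm a := by omega
      have hQlo := hQ hdes
      have : π.symm (a + 1) ∈ Bs π a ∩ Set.Ico lo i :=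
        ⟨⟨hdes, by rw [Equiv.apply_symm_apply]; omega⟩, hQlo, by omega⟩
      rw [hwin] at this
      exact this
    · rw [← hPeq, hcf]
  | s2c lo α i j T' hmem hlo hdiag hmin hh1 hh2 hrec ih =>
    intro hloP hloα hα hQ
    have hmemT := (hT _).mp hmem
    have hi1 : 1 ≤ i := hmemT.1
    have hcf_lb : j + 2 < cf π i := ((hT _).mp hh2).2
    have hwin : Bs π a ∩ Set.Ico lo i = ∅ :=
      no_B_in π a T hπ0 hT (by omega) hα
        (fun c hc hclo hcsum hclt => by have := hmin c hc hclo hcsum; omega)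
    have hcount : (Bs π a ∩ Set.Iio i).ncard = (Bs π a ∩ Set.Iio lo).ncard := by
      rw [Bs_split π a hlo, hwin]; simp
    have hiB : i ∈ Bs π a := by
      rcases lt_trichotomy i (π.symm a) with hlt | he | hgt
      · refine ⟨hlt, ?_⟩
        rcases lt_trichotomy (π i) a with h' | h' | h'
        · exfalso
          have := sum_at_small π a i hlt h'
          omega
        · exfalso
          have : i = π.symm a := by rw [← h', Equiv.symm_apply_apply]
          omega
        · exact h'
      · exfalso
        have hsum := sum_at_P π a
        rw [← BP_eq π a] at hsum
        rw [← he] at hsum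
        omega
      · exfalso
        have hwin' : Bs π a ∩ Set.Ico lo (π.symm a) = ∅ := by
          apply Set.eq_empty_of_subset_empty
          intro k hk
          have hk2 := hk.2
          simp only [Set.mem_Ico] at hk2
          have : k ∈ Bs π a ∩ Set.Ico lo i := ⟨hk.1, hk2.1, by omega⟩
          rwa [hwin] at this
        obtain ⟨hc, he⟩ := P_cell π a T hπ0 ha hT hα hloP (by omega) hwin'
        have := hmin _ hc hloP he
        simp only at this
        omega
    have hiP : i < π.symm a := hiB.1
    have hia : a < π i := hiB.2
    have hsum := sum_at_B π a i hiB.1 hiB.2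
    have hE : {u | a < u ∧ u < π i ∧ i < π.symm u}.Nonempty := by
      apply Set.nonempty_of_ncard_ne_zero
      omega
    have hπi_ne1 : π i ≠ a + 1 := by
      intro he
      obtain ⟨u, hu1, hu2, _⟩ := hE
      rw [he] at hu2
      omega
    have hQi : π.symm (a + 1) ≠ i := fun he => hπi_ne1 (by rw [← he, Equiv.apply_symm_apply])
    apply ih
    · omega
    · omega
    · rw [Bs_succ π a hiB, hcount]; omega
    · intro hdes
      have hQlo := hQ hdes
      by_contra hcon
      push_neg at hcon
      have : π.symm (a + 1) ∈ Bs π a ∩ Set.Ico lo i :=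
        ⟨⟨hdes, by rw [Equiv.apply_symm_apply]; omega⟩, hQlo, by omega⟩
      rw [hwin] at this
      exact this

lemma permOf_nil : permOf [] = 1 := rfl

lemma permOf_append (w : List ℕ) (a : ℕ) :
    permOf (w ++ [a]) = permOf w * Equiv.swap a (a + 1) := by
  simp [permOf]

lemma permOf_zero {w : List ℕ} (hw : IsPosWord w) : permOf w 0 = 0 := by
  induction w with
  | nil => rfl
  | cons x t ih =>
    have hx : 1 ≤ x := hw x List.mem_cons_self
    have ht : IsPosWord t := fun b hb => hw b (List.mem_cons_of_mem _ hb)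
    show ((List.map (fun i => Equiv.swap i (i + 1)) (x :: t)).prod : Equiv.Perm ℕ) 0 = 0
    rw [List.map_cons, List.prod_cons, Equiv.Perm.mul_apply]
    have h0 : (permOf t) 0 = 0 := ih ht
    rw [show ((List.map (fun i => Equiv.swap i (i + 1)) t).prod : Equiv.Perm ℕ) = permOf t from rfl, h0]
    exact Equiv.swap_apply_of_ne_of_ne (by omega) (by omega)

lemma symm_append (σ : Equiv.Perm ℕ) (a : ℕ) :
    (σ * Equiv.swap a (a + 1)).symm = Equiv.swap a (a + 1) * σ.symm := by
  rw [← Equiv.Perm.inv_def, mul_inv_rev, Equiv.swap_inv, Equiv.Perm.inv_def]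

lemma swap_lt_iff (a x y : ℕ) (hx : ¬(x = a ∧ y = a + 1)) (hy : ¬(x = a + 1 ∧ y = a)) :
    Equiv.swap a (a + 1) x < Equiv.swap a (a + 1) y ↔ x < y := by
  simp only [Equiv.swap_apply_def]
  split_ifs <;> omega

lemma cf_update (π : Equiv.Perm ℕ) (a : ℕ) (hasc : π.symm a < π.symm (a + 1)) (i : ℕ) :
    cf (Equiv.swap a (a + 1) * π) i = cf π i + (if i = π.symm a then 1 else 0) := by
  classical
  have happ : ∀ x, (Equiv.swap a (a + 1) * π) x = Equiv.swap a (a + 1) (π x) := fun x => rfl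
  by_cases hi : i = π.symm a
  · subst hi
    rw [if_pos rfl]
    have hset : {j | π.symm a < j ∧ (Equiv.swap a (a + 1) * π) j < (Equiv.swap a (a + 1) * π) (π.symm a)}
        = insert (π.symm (a + 1)) {j | π.symm a < j ∧ π j < π (π.symm a)} := by
      ext j
      simp only [mem_setOf_eq, mem_insert_iff, happ, Equiv.apply_symm_apply]
      rw [Equiv.swap_apply_left]
      constructor
      · rintro ⟨hj, hlt⟩
        by_cases hjQ : j = π.symm (a + 1)
        · exact Or.inl hjQ
        · right
          refine ⟨hj, ?_⟩
          have hne1 : π j ≠ a + 1 := fun h => hjQ (by rw [← h, Equiv.symm_apply_apply])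
          have hne2 : π j ≠ a := by
            intro h
            have : j = π.symm a := by rw [← h, Equiv.symm_apply_apply]
            omega
          rw [Equiv.swap_apply_of_ne_of_ne hne2 hne1] at hlt
          omega
      · rintro (rfl | ⟨hj, hlt⟩)
        · refine ⟨hasc, ?_⟩
          rw [Equiv.apply_symm_apply, Equiv.swap_apply_right]
          omega
        · have hne2 : π j ≠ a := by
            intro h
            have : j = π.symm a := by rw [← h, Equiv.symm_apply_apply]
            omega
          have hne1 : π j ≠ a + 1 := by omega
          refine ⟨hj, ?_⟩
          rw [Equiv.swap_apply_of_ne_of_ne hne2 hne1]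
          omega
    show {j | π.symm a < j ∧ (Equiv.swap a (a + 1) * π) j < (Equiv.swap a (a + 1) * π) (π.symm a)}.ncard = _
    rw [hset]
    rw [Set.ncard_insert_of_notMem ?_ ((cf_set_fin π (π.symm a)))]
    · rfl
    · rintro ⟨-, hlt⟩
      rw [Equiv.apply_symm_apply, Equiv.apply_symm_apply] at hlt
      omega
  · rw [if_neg hi]
    have hset : {j | i < j ∧ (Equiv.swap a (a + 1) * π) j < (Equiv.swap a (a + 1) * π) i}
        = {j | i < j ∧ π j < π i} := by
      ext j
      simp only [mem_setOf_eq, happ]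
      refine and_congr_right fun hj => ?_
      apply swap_lt_iff
      · rintro ⟨hja, hia⟩
        -- π j = a ∧ π i = a + 1 : then i = π.symm (a+1), j = π.symm a, but π.symm a < π.symm (a+1) = i < j
        have hj' : j = π.symm a := by rw [← hja, Equiv.symm_apply_apply]
        have hi' : i = π.symm (a + 1) := by rw [← hia, Equiv.symm_apply_apply]
        omega
      · rintro ⟨-, hia⟩
        exact hi (by rw [← hia, Equiv.symm_apply_apply])
    show {j | i < j ∧ (Equiv.swap a (a + 1) * π) j < (Equiv.swap a (a + 1) * π) i}.ncard = _
    rw [hset]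
    rfl

lemma step_char (π : Equiv.Perm ℕ) (a : ℕ) (hπ0 : π 0 = 0) (ha : 1 ≤ a)
    (hasc : π.symm a < π.symm (a + 1))
    (T : Finset Cell) (hT : ∀ x : Cell, x ∈ T ↔ 1 ≤ x.1 ∧ x.2 < cf π x.1) :
    ∀ x : Cell, x ∈ insert (π.symm a, cf π (π.symm a)) T ↔
      1 ≤ x.1 ∧ x.2 < cf (Equiv.swap a (a + 1) * π) x.1 := by
  intro x
  have hP1 : 1 ≤ π.symm a := P_pos π a hπ0 ha
  rw [Finset.mem_insert, hT, cf_update π a hasc x.1]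
  by_cases hx1 : x.1 = π.symm a
  · rw [if_pos hx1]
    constructor
    · rintro (rfl | ⟨h1, h2⟩)
      · exact ⟨by simpa using hP1, by simp [hx1]⟩
      · exact ⟨h1, by omega⟩
    · rintro ⟨h1, h2⟩
      by_cases hx2 : x.2 = cf π (π.symm a)
      · left
        have : x = (x.1, x.2) := rfl
        rw [this, hx1, hx2]
      · right
        refine ⟨h1, ?_⟩
        rw [hx1] at h2 ⊢
        omega
  · rw [if_neg hx1]
    constructor
    · rintro (rfl | ⟨h1, h2⟩)
      · exact absurd rfl hx1
      · exact ⟨h1, by omega⟩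
    · rintro ⟨h1, h2⟩
      exact Or.inr ⟨h1, by omega⟩

lemma srdiagram_char {w : List ℕ} {T : Finset Cell} (h : SRDiagram w T) (hw : IsPosWord w) :
    ∀ x : Cell, x ∈ T ↔ 1 ≤ x.1 ∧ x.2 < cf (permOf w).symm x.1 := by
  induction h with
  | nil =>
    intro x
    simp only [Finset.notMem_empty, false_iff, not_and, not_lt]
    intro _
    have : cf (permOf ([] : List ℕ)).symm x.1 = 0 := by
      rw [show (permOf ([] : List ℕ)).symm = 1 from rfl]
      have : {j | x.1 < j ∧ (1 : Equiv.Perm ℕ) j < (1 : Equiv.Perm ℕ) x.1} = ∅ := by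
        ext j; simp only [mem_setOf_eq, mem_empty_iff_false, iff_false, not_and]
        intro h1
        show ¬ j < x.1
        omega
      rw [cf, this, Set.ncard_empty]
    omega
  | @snoc w T T' aL hw' ha' ih =>
    have hwpos : IsPosWord w := fun b hb => hw b (List.mem_append_left _ hb)
    have haL : 1 ≤ aL := hw aL (List.mem_append_right _ (List.mem_singleton_self aL))
    have hchar := ih hwpos
    set π := (permOf w).symm with hπ
    have hπ0 : π 0 = 0 := by
      have h0 : permOf w 0 = 0 := permOf_zero hwpos
      rw [hπ]
      nth_rewrite 1 [← h0]
      exact Equiv.symm_apply_apply _ _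
    obtain ⟨hasc, hT'⟩ := slide_main π aL T hπ0 haL hchar 0 aL T' ha'
      (Nat.zero_le _) (Nat.zero_le _) (by
        have h0 : Bs π aL ∩ Set.Iio 0 = ∅ := by
          ext k
          simp only [Set.mem_inter_iff, Set.mem_Iio, Set.mem_empty_iff_false, iff_false, not_and]
          intro _
          omega
        rw [h0, Set.ncard_empty]
        omega) (fun _ => Nat.zero_le _)
    rw [hT']
    intro x
    rw [step_char π aL hπ0 haL hasc T hchar x]
    rw [permOf_append, symm_append]

lemma rothe_col_eq (ω : Equiv.Perm ℕ) (hω0 : ω 0 = 0) (i : ℕ) :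
    {r : ℕ | (r, i) ∈ RotheDiagram ω}.ncard = cf ω.symm i := by
  have hsym0 : ω.symm 0 = 0 := by nth_rewrite 1 [← hω0]; exact Equiv.symm_apply_apply _ _
  have hset : {r : ℕ | (r, i) ∈ RotheDiagram ω} = {r | ω r ∈ {j | i < j ∧ ω.symm j < ω.symm i}} := by
    ext r
    simp only [RotheDiagram, mem_setOf_eq, Equiv.symm_apply_apply]
    constructor
    · rintro ⟨h1, h2, h3, h4⟩
      exact ⟨h3, h4⟩
    · rintro ⟨h1, h2⟩
      refine ⟨?_, ?_, h1, h2⟩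
      · by_contra hr
        have : r = 0 := by omega
        subst this
        rw [hω0] at h1
        omega
      · by_contra hi
        have : i = 0 := by omega
        subst this
        rw [hsym0] at h2
        omega
  rw [hset, preim_eq_image]
  rw [Set.ncard_image_of_injective _ ω.symm.injective]
  rfl

lemma filter_card (T : Finset Cell) (π : Equiv.Perm ℕ) (hπ0 : π 0 = 0)
    (hT : ∀ x : Cell, x ∈ T ↔ 1 ≤ x.1 ∧ x.2 < cf π x.1) (i : ℕ) :
    (T.filter fun c => c.1 = i).card = cf π i := by
  classical
  rcases Nat.eq_zero_or_pos i with rfl | hi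
  · have h1 : (T.filter fun c => c.1 = 0) = ∅ := by
      apply Finset.filter_eq_empty_iff.mpr
      intro c hc
      have := (hT c).mp hc
      omega
    have h2 : cf π 0 = 0 := by
      have : {j | 0 < j ∧ π j < π 0} = ∅ := by
        ext j
        simp only [mem_setOf_eq, mem_empty_iff_false, iff_false, not_and, not_lt, hπ0]
        omega
      rw [cf, this, Set.ncard_empty]
    rw [h1, h2, Finset.card_empty]
  · have himg : (T.filter fun c => c.1 = i) = (Finset.range (cf π i)).image fun j => ((i, j) : Cell) := by
      ext x
      simp only [Finset.mem_filter, Finset.mem_image, Finset.mem_range, hT]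
      constructor
      · rintro ⟨⟨h1, h2⟩, h3⟩
        exact ⟨x.2, by rw [← h3] at *; exact h2, by rw [← h3]⟩
      · rintro ⟨j, hj, rfl⟩
        exact ⟨⟨hi, hj⟩, rfl⟩
    rw [himg, Finset.card_image_of_injective _ (fun x y h => by simpa using h), Finset.card_range]

end TowerPf

/-- For every column index `i`, the size of the `i`-th tower
of the tower diagram of `ω` equals the number of cells of the Rothe diagram of
`ω` in column `i`. -/
theorem tower_column_eq_rothe_column
    (ω : Equiv.Perm ℕ) (T : Finset Cell)
    (hT : ∃ w : List ℕ, IsReducedWord w ∧ permOf w = ω ∧ SRDiagram w T) :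
    ∀ i : ℕ, (T.filter fun c => c.1 = i).card =
      Set.ncard {r : ℕ | (r, i) ∈ RotheDiagram ω} := by
  obtain ⟨w, hred, hperm, hsr⟩ := hT
  subst hperm
  have hpos : IsPosWord w := hred.1
  have hchar := TowerPf.srdiagram_char hsr hpos
  have hω0 : permOf w 0 = 0 := TowerPf.permOf_zero hpos
  have hπ0 : (permOf w).symm 0 = 0 := by
    nth_rewrite 1 [← hω0]
    exact Equiv.symm_apply_apply _ _
  intro i
  rw [TowerPf.rothe_col_eq (permOf w) hω0 i]
  exact TowerPf.filter_card T (permOf w).symm hπ0 hchar i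
end

section
/- Let (T, T⁻) be the complete tower diagram of a finite permutation with its natural labelling, and let C be the cell of the virtual tower tableau T⁻ carrying the label 1. Then the row of the virtual tower diagram just below the cell C contains no cells. -/
-- ### auxiliary lemmas

lemma concat_inj {w w' : List ℕ} {a a' : ℕ} (h : w ++ [a] = w' ++ [a']) :
    w = w' ∧ a = a' := by
  have h2 := congrArg List.reverse h
  simp only [List.reverse_append, List.reverse_cons, List.reverse_nil,
    List.nil_append, List.singleton_append, List.cons.injEq] at h2
  exact ⟨by simpa using congrArg List.reverse h2.2, h2.1⟩

lemma srdiagram_nil_aux {v : List ℕ} {T : Finset Cell} (h : SRDiagram v T) :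
    v = [] → T = ∅ := by
  cases h with
  | nil => intro; rfl
  | snoc hw ha => intro hv; simp at hv

lemma srdiagram_nil {T : Finset Cell} (h : SRDiagram [] T) : T = ∅ :=
  srdiagram_nil_aux h rfl

lemma srdiagram_snoc_aux {v : List ℕ} {T : Finset Cell} (h : SRDiagram v T) :
    ∀ w a, v = w ++ [a] → ∃ T₀, SRDiagram w T₀ ∧ Slides T₀ a T := by
  cases h with
  | nil => intro w a hv; exact absurd hv.symm (by simp)
  | @snoc w' T₀ T'' a' hw ha =>
    intro w a hv
    obtain ⟨rfl, rfl⟩ := concat_inj hv.symm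
    exact ⟨T₀, hw, ha⟩

lemma srdiagram_snoc {w : List ℕ} {a : ℕ} {T : Finset Cell}
    (h : SRDiagram (w ++ [a]) T) : ∃ T₀, SRDiagram w T₀ ∧ Slides T₀ a T :=
  srdiagram_snoc_aux h w a rfl

lemma slideAux_tower {T T' : Finset Cell} {lo α : ℕ}
    (h : SlideAux T lo α T') (hT : IsTowerDiagram T) (hα : 1 ≤ α) :
    IsTowerDiagram T' := by
  induction h with
  | s1a lo α h1 h2 =>
    intro c hc
    rcases Finset.mem_insert.1 hc with rfl | hc
    · exact ⟨hα, fun j' hj' => by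
        simp only [Nat.le_zero] at hj'; subst hj'; exact Finset.mem_insert_self _ _⟩
    · exact ⟨(hT c hc).1, fun j' hj' => Finset.mem_insert_of_mem ((hT c hc).2 j' hj')⟩
  | s1c lo α T' h1 h2 h2' h3 hrec ih => exact ih (by omega)
  | s2a lo α i j hmem hlo hdiag hmin htop =>
    intro c hc
    rcases Finset.mem_insert.1 hc with rfl | hc
    · refine ⟨(hT _ hmem).1, fun j' hj' => ?_⟩
      rcases Nat.lt_or_ge j' (j + 1) with hj | hj
      · exact Finset.mem_insert_of_mem ((hT _ hmem).2 j' (by omega))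
      · have : j' = j + 1 := by omega
        subst this; exact Finset.mem_insert_self _ _
    · exact ⟨(hT c hc).1, fun j' hj' => Finset.mem_insert_of_mem ((hT c hc).2 j' hj')⟩
  | s2c lo α i j T' hmem hlo hdiag hmin h1 h2 hrec ih => exact ih (by omega)

lemma srdiagram_tower {w : List ℕ} {T : Finset Cell}
    (h : SRDiagram w T) (hw : IsPosWord w) : IsTowerDiagram T := by
  induction h with
  | nil => intro c hc; simp at hc
  | @snoc w' T₀ T'' a hw' ha ih =>
    have hpos : IsPosWord w' := fun b hb => hw b (by simp [hb])
    exact slideAux_tower ha (ih hpos) (hw a (by simp))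

-- ### labels

def lbl (T : Finset Cell) (c : Cell) : ℕ :=
  (T.filter fun d => c.1 < d.1).card + c.2 + 1

lemma lbl_lt {T : Finset Cell} (hTD : IsTowerDiagram T) {c : Cell} (hc : c ∈ T)
    {c' : Cell} (hlt : c'.1 < c.1) : lbl T c < lbl T c' := by
  classical
  have hsub : (T.filter fun d => c.1 < d.1) ∪
      ((Finset.range (c.2 + 1)).image fun j => (c.1, j)) ⊆
      T.filter fun d => c'.1 < d.1 := by
    intro d hd
    rcases Finset.mem_union.1 hd with hd | hd
    · rcases Finset.mem_filter.1 hd with ⟨hdT, hdc⟩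
      exact Finset.mem_filter.2 ⟨hdT, by omega⟩
    · rcases Finset.mem_image.1 hd with ⟨j, hj, rfl⟩
      rw [Finset.mem_range] at hj
      exact Finset.mem_filter.2 ⟨(hTD c hc).2 j (by omega), hlt⟩
  have hdisj : Disjoint (T.filter fun d => c.1 < d.1)
      ((Finset.range (c.2 + 1)).image fun j => (c.1, j)) := by
    rw [Finset.disjoint_left]
    intro d hd hd'
    rcases Finset.mem_filter.1 hd with ⟨_, hdc⟩
    rcases Finset.mem_image.1 hd' with ⟨j, _, rfl⟩
    simp at hdc
  have hcardim : ((Finset.range (c.2 + 1)).image fun j => (c.1, j)).card = c.2 + 1 := by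
    rw [Finset.card_image_of_injective _ (fun a b hab => by simpa using hab)]
    simp
  have h1 := Finset.card_le_card hsub
  rw [Finset.card_union_of_disjoint hdisj, hcardim] at h1
  unfold lbl
  omega

lemma lbl_le_card {T : Finset Cell} (hTD : IsTowerDiagram T) {c : Cell}
    (hc : c ∈ T) : lbl T c ≤ T.card := by
  classical
  have hsub : (T.filter fun d => c.1 < d.1) ∪
      ((Finset.range (c.2 + 1)).image fun j => (c.1, j)) ⊆ T := by
    intro d hd
    rcases Finset.mem_union.1 hd with hd | hd
    · exact (Finset.mem_filter.1 hd).1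
    · rcases Finset.mem_image.1 hd with ⟨j, hj, rfl⟩
      rw [Finset.mem_range] at hj
      exact (hTD c hc).2 j (by omega)
  have hdisj : Disjoint (T.filter fun d => c.1 < d.1)
      ((Finset.range (c.2 + 1)).image fun j => (c.1, j)) := by
    rw [Finset.disjoint_left]
    intro d hd hd'
    rcases Finset.mem_filter.1 hd with ⟨_, hdc⟩
    rcases Finset.mem_image.1 hd' with ⟨j, _, rfl⟩
    simp at hdc
  have hcardim : ((Finset.range (c.2 + 1)).image fun j => (c.1, j)).card = c.2 + 1 := by
    rw [Finset.card_image_of_injective _ (fun a b hab => by simpa using hab)]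
    simp
  have h1 := Finset.card_le_card hsub
  rw [Finset.card_union_of_disjoint hdisj, hcardim] at h1
  unfold lbl
  omega

lemma lbl_injOn {T : Finset Cell} (hTD : IsTowerDiagram T) {c c' : Cell}
    (hc : c ∈ T) (hc' : c' ∈ T) (h : lbl T c = lbl T c') : c = c' := by
  rcases Nat.lt_trichotomy c.1 c'.1 with hlt | heq | hgt
  · exact absurd h (Nat.ne_of_gt (lbl_lt hTD hc' hlt))
  · have : c.2 = c'.2 := by
      unfold lbl at h
      rw [heq] at h
      omega
    exact Prod.ext heq this
  · exact absurd h (Nat.ne_of_lt (lbl_lt hTD hc hgt))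

lemma lbl_surj {T : Finset Cell} (hTD : IsTowerDiagram T) {k : ℕ}
    (h1 : 1 ≤ k) (h2 : k ≤ T.card) : ∃ c ∈ T, lbl T c = k := by
  classical
  have himg : T.image (lbl T) = Finset.Icc 1 T.card := by
    apply Finset.eq_of_subset_of_card_le
    · intro x hx
      rcases Finset.mem_image.1 hx with ⟨c, hc, rfl⟩
      exact Finset.mem_Icc.2 ⟨by unfold lbl; omega, lbl_le_card hTD hc⟩
    · rw [Nat.card_Icc]
      have : (T.image (lbl T)).card = T.card :=
        Finset.card_image_iff.2 fun c hc c' hc' h => lbl_injOn hTD hc hc' h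
      omega
  have : k ∈ T.image (lbl T) := by
    rw [himg]; exact Finset.mem_Icc.2 ⟨h1, h2⟩
  rcases Finset.mem_image.1 this with ⟨c, hc, hck⟩
  exact ⟨c, hc, hck⟩

-- ### flight number facts

lemma flight_forced {S : Finset Cell} {c : Cell} {f : ℕ}
    (h : ∀ d ∈ S, c.1 ≤ d.1) (hf : FlightNumber S c f) : f = c.1 + c.2 := by
  obtain ⟨P, hP, m, hm, hmf, _⟩ := hf
  have hPc : P = {c} := by
    cases hP with
    | direct i j hmem hnone => rfl
    | zigzag i j i' j' P hmem hmem' hleft hdiag hclosest hup hrec =>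
      exact absurd (h _ hmem') (by simp; omega)
  rw [hPc] at hm
  rw [Finset.mem_singleton] at hm
  subst hm
  omega

lemma naturalTableau_eq {T : Finset Cell} :
    naturalTableau T = T.image fun c => (c, lbl T c) := rfl

lemma mem_naturalTableau {T : Finset Cell} {p : Cell × ℕ} :
    p ∈ naturalTableau T ↔ ∃ c ∈ T, p = (c, lbl T c) := by
  rw [naturalTableau_eq]
  constructor
  · intro hp; rcases Finset.mem_image.1 hp with ⟨c, hc, rfl⟩; exact ⟨c, hc, rfl⟩
  · rintro ⟨c, hc, rfl⟩; exact Finset.mem_image.2 ⟨c, hc, rfl⟩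

lemma naturalTableau_card {T : Finset Cell} : (naturalTableau T).card = T.card := by
  rw [naturalTableau_eq]
  exact Finset.card_image_of_injective _ fun a b hab => (Prod.ext_iff.1 hab).1

lemma mem_shape_labelLE_nat {T : Finset Cell} {m : ℕ} {d : Cell} :
    d ∈ shapeOf (labelLE (naturalTableau T) m) ↔ d ∈ T ∧ lbl T d ≤ m := by
  unfold shapeOf labelLE
  constructor
  · intro hd
    rcases Finset.mem_image.1 hd with ⟨p, hp, rfl⟩
    rcases Finset.mem_filter.1 hp with ⟨hp1, hp2⟩
    rcases mem_naturalTableau.1 hp1 with ⟨c, hc, rfl⟩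
    exact ⟨hc, hp2⟩
  · rintro ⟨hd, hlbl⟩
    exact Finset.mem_image.2 ⟨(d, lbl T d),
      Finset.mem_filter.2 ⟨mem_naturalTableau.2 ⟨d, hd, rfl⟩, hlbl⟩, rfl⟩

lemma eta_get {T : Finset Cell} (hTD : IsTowerDiagram T) {η : List ℕ}
    (hη : ReadsTo (naturalTableau T) η) {k : ℕ} (hk : k < η.length)
    {c : Cell} (hc : c ∈ T) (hl : lbl T c = k + 1) :
    η[k] = c.1 + c.2 := by
  have hmem : (c, (k : ℕ) + 1) ∈ naturalTableau T := by
    rw [← hl]; exact mem_naturalTableau.2 ⟨c, hc, rfl⟩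
  have hfn := hη.2 ⟨k, hk⟩ c hmem
  have hright : ∀ d ∈ shapeOf (labelLE (naturalTableau T) (k + 1)), c.1 ≤ d.1 := by
    intro d hd
    rcases mem_shape_labelLE_nat.1 hd with ⟨hdT, hdl⟩
    by_contra hlt
    have := lbl_lt hTD hc (c' := d) (by omega)
    omega
  have := flight_forced hright hfn
  simpa using this

-- ### the invariant

def PInv (L M : ℕ) (D : Finset Cell) : Prop :=
  (∀ c ∈ D, L ≤ c.1) ∧ (∀ x, L ≤ x → x ≤ M → (x, 0) ∈ D) ∧ (∀ c ∈ D, c.1 ≠ M + 1)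

lemma slideAux_P {L M : ℕ} {D D' : Finset Cell} {lo α : ℕ}
    (h : SlideAux D lo α D') (hP : PInv L M D) (hLM : L ≤ M)
    (hα : L + 1 ≤ α) (hlo : α ≤ M + 1 → lo < α) : PInv L M D' := by
  induction h with
  | s1a lo α h1 h2 =>
    have hbig : M + 2 ≤ α := by
      by_contra hcon
      have h1' : α ≤ M + 1 := by omega
      have hcell : ((α - 1 : ℕ), (0 : ℕ)) ∈ D := hP.2.1 (α - 1) (by omega) (by omega)
      exact h1 _ hcell (by have := hlo h1'; simp; omega) (by simp; omega)
    refine ⟨?_, ?_, ?_⟩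
    · intro c hc
      rcases Finset.mem_insert.1 hc with rfl | hc
      · simp; omega
      · exact hP.1 c hc
    · intro x hx1 hx2; exact Finset.mem_insert_of_mem (hP.2.1 x hx1 hx2)
    · intro c hc
      rcases Finset.mem_insert.1 hc with rfl | hc
      · simp; omega
      · exact hP.2.2 c hc
  | s1c lo α T' h1 h2 h2' h3 hrec ih =>
    have hbig : M + 2 ≤ α := by
      by_contra hcon
      have h1' : α ≤ M + 1 := by omega
      have hcell : ((α - 1 : ℕ), (0 : ℕ)) ∈ D := hP.2.1 (α - 1) (by omega) (by omega)
      exact h1 _ hcell (by have := hlo h1'; simp; omega) (by simp; omega)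
    exact ih (by omega) (by omega)
  | s2a lo α i j hmem hlo' hdiag hmin htop =>
    refine ⟨?_, ?_, ?_⟩
    · intro c hc
      rcases Finset.mem_insert.1 hc with rfl | hc
      · simpa using hP.1 _ hmem
      · exact hP.1 c hc
    · intro x hx1 hx2; exact Finset.mem_insert_of_mem (hP.2.1 x hx1 hx2)
    · intro c hc
      rcases Finset.mem_insert.1 hc with rfl | hc
      · simpa using hP.2.2 _ hmem
      · exact hP.2.2 c hc
  | s2c lo α i j T' hmem hlo' hdiag hmin h1 h2 hrec ih =>
    exact ih (by omega) (by omega)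

-- ### the first block builds the bottom row

lemma blockA {rv : List ℕ} {L h M : ℕ} (hM : M + 1 = L + h) (hhlen : h ≤ rv.length)
    (hblock : ∀ t, (ht : t < rv.length) → t < h → rv[t] + t + 1 = L + h) :
    ∀ k, k ≤ h → ∀ Tk, SRDiagram (rv.take k) Tk →
      ∀ c : Cell, c ∈ Tk ↔ (c.2 = 0 ∧ L + h ≤ c.1 + k ∧ c.1 ≤ M) := by
  intro k
  induction k with
  | zero =>
    intro _ Tk hTk c
    have hTe : Tk = ∅ := srdiagram_nil (by simpa using hTk)
    subst hTe
    simp only [Finset.notMem_empty, false_iff]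
    rintro ⟨h1, h2, h3⟩
    omega
  | succ k ih =>
    intro hk Tk hTk c
    have hkr : k < rv.length := by omega
    have htake : rv.take (k + 1) = rv.take k ++ [rv[k]] := by
      rw [List.take_succ, List.getElem?_eq_getElem hkr]
      rfl
    rw [htake] at hTk
    obtain ⟨T₀, hT₀, hslide⟩ := srdiagram_snoc hTk
    have hchar := ih (by omega) T₀ hT₀
    have ha : rv[k] + k + 1 = L + h := hblock k hkr (by omega)
    cases hslide with
    | s1a lo α h1 h2 =>
      constructor
      · intro hc
        rcases Finset.mem_insert.1 hc with rfl | hc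
        · simp; omega
        · have := (hchar c).1 hc
          refine ⟨this.1, by omega, this.2.2⟩
      · rintro ⟨hc2, hc3, hc4⟩
        by_cases hcase : L + h ≤ c.1 + k
        · exact Finset.mem_insert_of_mem ((hchar c).2 ⟨hc2, hcase, hc4⟩)
        · have hc1 : c.1 = rv[k] := by omega
          have : c = (rv[k], 0) := Prod.ext hc1 hc2
          rw [this]
          exact Finset.mem_insert_self _ _
    | s1c lo α T' h1 h2 h2' h3 hrec =>
      exfalso
      have := (hchar (rv[k], 0)).1 h2
      simp at this
      omega
    | s2a lo α i j hmem hlo hdiag hmin htop =>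
      exfalso
      have := (hchar (i, j)).1 hmem
      simp at this
      omega
    | s2c lo α i j T' hmem hlo hdiag hmin h1 h2 hrec =>
      exfalso
      have := (hchar (i, j)).1 hmem
      simp at this
      omega

-- ### the main invariant propagation

lemma blockC {rv : List ℕ} {L h M : ℕ} (hM : M + 1 = L + h) (hh : 1 ≤ h)
    (hhlen : h ≤ rv.length)
    (hblock : ∀ t, (ht : t < rv.length) → t < h → rv[t] + t + 1 = L + h) :
    ∀ u Tu, SRDiagram u Tu → ∀ r, u = rv.take h ++ r → (∀ b ∈ r, L + 1 ≤ b) →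
      PInv L M Tu := by
  intro u Tu hu
  induction hu with
  | nil =>
    intro r hr hrb
    exfalso
    have h0 : rv.take h = [] := (List.append_eq_nil_iff.1 hr.symm).1
    have hlen := congrArg List.length h0
    simp only [List.length_take, List.length_nil] at hlen
    omega
  | @snoc w T T' a hw ha ih =>
    intro r hr hrb
    rcases List.eq_nil_or_concat r with rfl | ⟨r', b, rfl⟩
    · -- the last step of the first block: the letter is L
      rw [List.append_nil] at hr
      have hh1 : 1 ≤ h := by omega
      have hkr : h - 1 < rv.length := by omega
      have htake : rv.take h = rv.take (h - 1) ++ [rv[h - 1]] := by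
        conv_lhs => rw [show h = (h - 1) + 1 by omega]
        rw [List.take_succ, List.getElem?_eq_getElem hkr]
        rfl
      rw [htake] at hr
      obtain ⟨hw', haeq⟩ := concat_inj hr
      have hchar := blockA hM hhlen hblock (h - 1) (by omega) T (by rw [← hw']; exact hw)
      have haval : rv[h - 1] + (h - 1) + 1 = L + h := hblock (h - 1) hkr (by omega)
      have haL : a = L := by rw [haeq]; omega
      rw [haL] at ha
      cases ha with
      | s1a lo α h1 h2 =>
        refine ⟨?_, ?_, ?_⟩
        · intro c hc
          rcases Finset.mem_insert.1 hc with rfl | hc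
          · simp
          · have := (hchar c).1 hc; omega
        · intro x hx1 hx2
          rcases Nat.eq_or_lt_of_le hx1 with rfl | hx1'
          · exact Finset.mem_insert_self _ _
          · exact Finset.mem_insert_of_mem ((hchar (x, 0)).2 ⟨rfl, by simp; omega, by simpa⟩)
        · intro c hc
          rcases Finset.mem_insert.1 hc with rfl | hc
          · simp; omega
          · have := (hchar c).1 hc; omega
      | s1c lo α T' h1 h2 h2' h3 hrec =>
        exfalso
        have := (hchar (L, 0)).1 h2
        simp at this
        omega
      | s2a lo α i j hmem hlo hdiag hmin htop =>
        exfalso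
        have := (hchar (i, j)).1 hmem
        simp at this
        omega
      | s2c lo α i j T' hmem hlo hdiag hmin h1 h2 hrec =>
        exfalso
        have := (hchar (i, j)).1 hmem
        simp at this
        omega
    · -- a later letter: apply the preservation lemma
      rw [List.concat_eq_append, ← List.append_assoc] at hr
      obtain ⟨hw', hab⟩ := concat_inj hr
      subst hab
      have hPT := ih r' hw' fun x hx => hrb x (by simp [hx])
      have haL1 : L + 1 ≤ a := hrb a (by simp)
      exact slideAux_P ha hPT (by omega) haL1 fun _ => by omega

lemma getElem_idx_congr {α : Type*} {l : List α} {i j : ℕ} (h : i = j)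
    {hi : i < l.length} : l[i]'hi = l[j]'(h ▸ hi) := by subst h; rfl


/-- In the natural labelling of the complete tower diagram of
a finite permutation, the row of the virtual tower diagram just below the cell
labelled `1` is empty.  The virtual tower diagram is the reflection along
`y = -x` of the tower diagram `Trev` of the reversed word; under this
reflection a cell `(i, j)` of `Trev` sits in virtual row `i`, so the conclusion
says that `Trev` has no cell in column `C.1 + 1`. -/
theorem virtual_row_below_label_one_empty
    (w : List ℕ) (hw : IsReducedWord w)
    (T : Finset Cell) (hT : SRDiagram w T)
    (η : List ℕ) (hη : ReadsTo (naturalTableau T) η)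
    (Trev : Finset Cell) (hTrev : SRDiagram η.reverse Trev)
    (Rneg : Finset (Cell × ℕ)) (hstd : IsStandardTowerTableau Rneg)
    (hshape : shapeOf Rneg = Trev)
    (hread : ReadsTo Rneg η.reverse)
    (C : Cell) (hC : (C, 1) ∈ Rneg) :
    ∀ c ∈ Trev, c.1 ≠ C.1 + 1 := by
  classical
  have hTD : IsTowerDiagram T := srdiagram_tower hT hw.1
  have hlen : η.length = T.card := by rw [hη.1, naturalTableau_card]
  rcases Finset.eq_empty_or_nonempty T with rfl | hTne
  · have hη0 : η = [] := List.length_eq_zero_iff.1 (by simp [hlen])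
    subst hη0
    have : Trev = ∅ := srdiagram_nil (by simpa using hTrev)
    subst this
    intro c hc
    simp at hc
  · set n := T.card with hn
    have himg_ne : (T.image Prod.fst).Nonempty := hTne.image _
    set L := (T.image Prod.fst).min' himg_ne with hLdef
    have hLle : ∀ c ∈ T, L ≤ c.1 := fun c hc =>
      Finset.min'_le _ _ (Finset.mem_image_of_mem _ hc)
    obtain ⟨c₀, hc₀, hc₀L⟩ : ∃ c ∈ T, c.1 = L := by
      have := (T.image Prod.fst).min'_mem himg_ne
      rcases Finset.mem_image.1 this with ⟨c, hc, hcl⟩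
      exact ⟨c, hc, hcl⟩
    set h := (T.filter fun d => d.1 = L).card with hhdef
    have hL0 : (L, 0) ∈ T := by
      have := (hTD c₀ hc₀).2 0 (Nat.zero_le _)
      rwa [hc₀L] at this
    have hh1 : 1 ≤ h :=
      Finset.card_pos.2 ⟨(L, 0), Finset.mem_filter.2 ⟨hL0, rfl⟩⟩
    have hhn : h ≤ n := Finset.card_le_card (Finset.filter_subset _ _)
    have hcardgt : (T.filter fun d => L < d.1).card + h = n := by
      have h1 : (T.filter fun d => d.1 = L).card
          + (T.filter fun d => ¬d.1 = L).card = T.card :=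
        Finset.card_filter_add_card_filter_not _
    -- identify the two filters
      have h2 : (T.filter fun d => ¬d.1 = L) = T.filter fun d => L < d.1 := by
        apply Finset.filter_congr
        intro d hd
        have := hLle d hd
        constructor
        · intro hne; omega
        · intro hlt; omega
      rw [h2] at h1
      omega
    have hlblL : ∀ j : ℕ, lbl T (L, j) = (n - h) + j + 1 := by
      intro j
      unfold lbl
      have hfe : (T.filter fun d => (L, j).1 < d.1) = T.filter fun d => L < d.1 := rfl
      rw [hfe]
      omega
    have hlblgt : ∀ c ∈ T, c.1 ≠ L → lbl T c ≤ n - h := by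
      intro c hc hne
      have hgt : L < c.1 := lt_of_le_of_ne (hLle c hc) (Ne.symm hne)
      have h1 := lbl_lt hTD hc (c' := (L, 0)) hgt
      have h2 := hlblL 0
      omega
    set M := L + h - 1 with hMdef
    have hM : M + 1 = L + h := by omega
    set rv := η.reverse with hrv
    have hrvlen : rv.length = n := by rw [hrv, List.length_reverse, hlen]
    have hblock : ∀ t, (ht : t < rv.length) → t < h → rv[t] + t + 1 = L + h := by
      intro t ht hth
      have htn : t < n := by omega
      have hgetrev : rv[t] = η[n - 1 - t]'(by omega) := by
        have h1 : t < η.reverse.length := by rw [List.length_reverse, hlen]; omega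
        have h2 := List.getElem_reverse (l := η) (i := t) h1
        have h3 := getElem_idx_congr (l := η)
          (show η.length - 1 - t = n - 1 - t by omega)
          (hi := by rw [hlen]; omega)
        exact h2.trans h3
      obtain ⟨c, hc, hlblc⟩ := lbl_surj hTD (k := n - t) (by omega) (by omega)
      have hcL : c.1 = L := by
        by_contra hne
        have := hlblgt c hc hne
        omega
      have hceq : c = (L, c.2) := Prod.ext hcL rfl
      have hlblval : lbl T (L, c.2) = (n - h) + c.2 + 1 := hlblL c.2
      rw [hceq] at hlblc
      have hval := eta_get hTD hη (k := n - 1 - t) (by omega) hc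
        (by rw [hceq, hlblc]; omega)
      rw [hgetrev, hval, hcL]
      omega
    have hrest : ∀ b ∈ rv.drop h, L + 1 ≤ b := by
      intro b hb
      rcases List.mem_iff_getElem.1 hb with ⟨i, hilen, hbi⟩
      have hhi : h + i < n := by
        have := hilen
        simp only [List.length_drop, hrvlen] at this
        omega
      rw [List.getElem_drop] at hbi
      have hgetrev : rv[h + i]'(by omega) = η[n - 1 - (h + i)]'(by omega) := by
        have h1 : h + i < η.reverse.length := by rw [List.length_reverse, hlen]; omega
        have h2 := List.getElem_reverse (l := η) (i := h + i) h1
        have h3 := getElem_idx_congr (l := η)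
          (show η.length - 1 - (h + i) = n - 1 - (h + i) by omega)
          (hi := by rw [hlen]; omega)
        exact h2.trans h3
      obtain ⟨c, hc, hlblc⟩ := lbl_surj hTD (k := n - h - i) (by omega) (by omega)
      have hcL : c.1 ≠ L := by
        intro hceq
        have hceq2 : c = (L, c.2) := Prod.ext hceq rfl
        rw [hceq2, hlblL c.2] at hlblc
        omega
      have hval := eta_get hTD hη (k := n - 1 - (h + i)) (by omega) hc
        (by rw [hlblc]; omega)
      have hcge : L + 1 ≤ c.1 := by
        have := hLle c hc
        omega
      rw [← hbi, hgetrev, hval]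
      omega
    have hP : PInv L M Trev :=
      blockC hM hh1 (by omega) hblock rv Trev hTrev (rv.drop h)
        (List.take_append_drop h rv).symm hrest
    -- the label-1 cell of Rneg
    obtain ⟨⟨hRTD, hRfst, hRsnd⟩, hRstd2⟩ := hstd
    have hR1 : ∀ p ∈ Rneg, 1 ≤ p.2 := by
      intro p hp
      have : p.2 ∈ Rneg.image Prod.snd := Finset.mem_image_of_mem _ hp
      rw [hRsnd] at this
      exact (Finset.mem_Icc.1 this).1
    have hsndinj : Set.InjOn Prod.snd (Rneg : Set (Cell × ℕ)) := by
      apply Finset.card_image_iff.1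
      rw [hRsnd, Nat.card_Icc]
      simp
    have hlab1 : labelLE Rneg 1 = {(C, 1)} := by
      ext p
      simp only [labelLE, Finset.mem_filter, Finset.mem_singleton]
      constructor
      · rintro ⟨hp, hple⟩
        have := hR1 p hp
        have hp2 : p.2 = (1 : ℕ) := by omega
        exact hsndinj (Finset.mem_coe.2 hp) (Finset.mem_coe.2 hC) (by rw [hp2])
      · rintro rfl
        exact ⟨hC, le_refl 1⟩
    have hshape1 : shapeOf (labelLE Rneg 1) = {C} := by
      rw [hlab1]
      simp [shapeOf]
    have hC2 : C.2 = 0 := by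
      have h2 := (hRstd2 (C, 1) hC).1
      rw [show ((C, 1) : Cell × ℕ).2 = 1 from rfl, hshape1] at h2
      have h3 := (h2 C (Finset.mem_singleton_self C)).2 0 (Nat.zero_le _)
      rw [Finset.mem_singleton] at h3
      have := congrArg Prod.snd h3
      simpa using this.symm
    have hn1 : 0 < (η.reverse).length := by
      rw [← hrv, hrvlen]
      omega
    have hfn := hread.2 ⟨0, hn1⟩ C (by simpa using hC)
    have hfn' : FlightNumber (shapeOf (labelLE Rneg 1)) C (rv.get ⟨0, hn1⟩) := hfn
    have hget0 : rv.get ⟨0, hn1⟩ = C.1 + C.2 := by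
      apply flight_forced ?_ hfn'
      rw [hshape1]
      intro d hd
      rw [Finset.mem_singleton] at hd
      subst hd
      exact le_refl _
    have hrv0 : rv[0]'(by rw [hrvlen]; omega) = M := by
      have := hblock 0 (by rw [hrvlen]; omega) (by omega)
      omega
    have hC1 : C.1 = M := by
      have e1 : rv.get ⟨0, hn1⟩ = rv[0]'(by rw [hrvlen]; omega) :=
        List.get_eq_getElem
      rw [e1, hrv0] at hget0
      omega
    intro c hc hceq
    have h3 := hP.2.2 c hc
    rw [hceq, hC1] at h3
    exact h3 rfl
end
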